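/- arXiv:1102.5022 — 8 statements merged into one kernel-verified Lean document; each statement's English description precedes it below -/
import Mathlib

section
/- Let A be a commutative ring and let P^• = (0 → P^0 → P^1 → ⋯ → P^n → 0) be a bounded cochain complex of finitely generated projective A-modules. Let P_• = Hom_A(P^•, A) be the chain complex obtained by applying the A-linear dual termwise (so P_q = Hom_A(P^q, A), with boundary maps dual to the coboundary maps). Then the following are equivalent: (1) H^j(P^•) = 0 for all j ≠ n, and H^n(P^•) is a finitely generated projective A-module; (2) H_j(P_•) = 0 for all j ≠ n. -/
namespace CochainCx

variable (R : Type) [CommRing R] (P : ℕ → Type)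
  [∀ i, AddCommGroup (P i)] [∀ i, Module R (P i)]
  (d : ∀ i, P i →ₗ[R] P (i + 1))

/-- The cohomology of the cochain complex `P⁰ → P¹ → ⋯` (with differentials `d`):
`H⁰ = ker d⁰` and `H^{j+1} = ker d^{j+1} / (im d^j ∩ ker d^{j+1})`, which is the usual
cohomology `ker/im` whenever `d ∘ d = 0`. -/
noncomputable def cohomology : ℕ → Type
  | 0 => ↥(LinearMap.ker (d 0))
  | (j + 1) => ↥(LinearMap.ker (d (j + 1))) ⧸
      Submodule.comap (LinearMap.ker (d (j + 1))).subtype (LinearMap.range (d j))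

noncomputable instance : ∀ j, AddCommGroup (cohomology R P d j)
  | 0 => inferInstanceAs (AddCommGroup ↥(LinearMap.ker (d 0)))
  | (j + 1) => inferInstanceAs (AddCommGroup (↥(LinearMap.ker (d (j + 1))) ⧸
      Submodule.comap (LinearMap.ker (d (j + 1))).subtype (LinearMap.range (d j))))

noncomputable instance : ∀ j, Module R (cohomology R P d j)
  | 0 => inferInstanceAs (Module R ↥(LinearMap.ker (d 0)))
  | (j + 1) => inferInstanceAs (Module R (↥(LinearMap.ker (d (j + 1))) ⧸
      Submodule.comap (LinearMap.ker (d (j + 1))).subtype (LinearMap.range (d j))))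

/-- The homology of the `R`-linear dual chain complex `P_• = Hom_R(P^•, R)`, whose
`j`-th term is `P j →ₗ[R] R` and whose differentials `(P (j+1) →ₗ[R] R) → (P j →ₗ[R] R)`
are the duals `φ ↦ φ ∘ d j` of the coboundaries:
`H_0 = coker` of the dual of `d 0`, and `H_{j+1} = ker/(im ∩ ker)`, which is the usual
homology `ker/im` whenever `d ∘ d = 0`. -/
noncomputable def dualHomology : ℕ → Type
  | 0 => (P 0 →ₗ[R] R) ⧸ LinearMap.range (LinearMap.lcomp R R (d 0))
  | (j + 1) => @HasQuotient.Quotient ↥(LinearMap.ker (LinearMap.lcomp R R (d j))) _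
      (@Submodule.hasQuotient R _ _ (Submodule.addCommGroup _) _)
      (Submodule.comap (LinearMap.ker (LinearMap.lcomp R R (d j))).subtype
        (LinearMap.range (LinearMap.lcomp R R (d (j + 1)))))

end CochainCx

section Aux

variable {R : Type} [CommRing R]

/-- Lifting along a map whose range contains the range of `u`, from a projective source. -/
private theorem auxLift {A B C : Type}
    [AddCommGroup A] [Module R A] [AddCommGroup B] [Module R B] [AddCommGroup C] [Module R C]
    [Module.Projective R C]
    (f : A →ₗ[R] B) (u : C →ₗ[R] B) (h : ∀ x, u x ∈ LinearMap.range f) :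
    ∃ t : C →ₗ[R] A, f.comp t = u := by
  obtain ⟨t, ht⟩ := Module.projective_lifting_property f.rangeRestrict
      (LinearMap.codRestrict (LinearMap.range f) u h) f.surjective_rangeRestrict
  exact ⟨t, LinearMap.ext fun x => congrArg Subtype.val (LinearMap.congr_fun ht x)⟩

private theorem auxSubsingletonHom {M N : Type} [AddCommGroup M] [Module R M]
    [AddCommGroup N] [Module R N] [Subsingleton M] : Subsingleton (M →ₗ[R] N) :=
  ⟨fun f g => LinearMap.ext fun x => by rw [Subsingleton.elim x 0, map_zero, map_zero]⟩

private theorem auxSubsingletonQuot {M : Type} [AddCommGroup M] [Module R M] [Subsingleton M]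
    (p : Submodule R M) : Subsingleton (M ⧸ p) :=
  Submodule.Quotient.subsingleton_iff.mpr
    (Submodule.eq_top_iff'.mpr fun x => by rw [Subsingleton.elim x 0]; exact p.zero_mem)

/-- Conjugating a map between dual modules through double duals. -/
private theorem auxConj {M N : Type} [AddCommGroup M] [Module R M] [AddCommGroup N] [Module R N]
    [Module.Finite R M] [Module.Projective R M] [Module.Finite R N] [Module.Projective R N]
    (h : (M →ₗ[R] R) →ₗ[R] (N →ₗ[R] R)) (y : N) (φ : M →ₗ[R] R) :
    φ ((Module.evalEquiv R M).symm ((LinearMap.lcomp R R h) (Module.evalEquiv R N y)))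
      = (h φ) y := by
  rw [Module.apply_evalEquiv_symm_apply]
  simp [LinearMap.lcomp_apply, Module.evalEquiv_apply, Module.Dual.eval_apply]

end Aux
set_option maxHeartbeats 4000000 in
open CochainCx in
/-- For a cochain complex `P^•` of finitely generated projective `R`-modules
concentrated in degrees `0,…,n`, the following are equivalent: (1) `H^j(P^•) = 0` for
`j ≠ n` and `H^n(P^•)` is finitely generated projective; (2) the homology of the dual
chain complex `Hom_R(P^•, R)` vanishes in all degrees `j ≠ n`. -/
theorem stmt_1 (R : Type) [CommRing R] (n : ℕ) (P : ℕ → Type)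
    [∀ i, AddCommGroup (P i)] [∀ i, Module R (P i)]
    [∀ i, Module.Finite R (P i)] [∀ i, Module.Projective R (P i)]
    (d : ∀ i, P i →ₗ[R] P (i + 1))
    (hdd : ∀ i, (d (i + 1)).comp (d i) = 0)
    (hbound : ∀ i, n < i → Subsingleton (P i)) :
    ((∀ j, j ≠ n → Subsingleton (cohomology R P d j)) ∧
        Module.Finite R (cohomology R P d n) ∧ Module.Projective R (cohomology R P d n)) ↔
      (∀ j, j ≠ n → Subsingleton (dualHomology R P d j)) := by
  -- high-degree vanishing on both sides
  have highCoh : ∀ j, n < j → Subsingleton (cohomology R P d j) := by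
    intro j hj
    match j, hj with
    | (k+1), hj =>
      have hsub : Subsingleton (P (k+1)) := hbound _ hj
      have : Subsingleton ↥(LinearMap.ker (d (k+1))) := inferInstance
      exact auxSubsingletonQuot (M := ↥(LinearMap.ker (d (k+1))) )
        (Submodule.comap (LinearMap.ker (d (k+1))).subtype (LinearMap.range (d k)))
  have highDual : ∀ j, n < j → Subsingleton (dualHomology R P d j) := by
    intro j hj
    match j, hj with
    | (k+1), hj =>
      have hsub : Subsingleton (P (k+1)) := hbound _ hj
      have : Subsingleton (P (k+1) →ₗ[R] R) := auxSubsingletonHom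
      have : Subsingleton ↥(LinearMap.ker (LinearMap.lcomp R R (d k))) := inferInstance
      exact @auxSubsingletonQuot R _ _ (Submodule.addCommGroup _) _ _
        (Submodule.comap (LinearMap.ker (LinearMap.lcomp R R (d k))).subtype
          (LinearMap.range (LinearMap.lcomp R R (d (k+1)))))
  obtain _ | m := n
  · -- n = 0
    have hk : LinearMap.ker (d 0) = ⊤ := by
      have : Subsingleton (P 1) := hbound 1 (by omega)
      exact Submodule.eq_top_iff'.mpr fun x => LinearMap.mem_ker.mpr (Subsingleton.elim _ _)
    constructor
    · intro _ j hj
      obtain ⟨k, rfl⟩ : ∃ k, j = k + 1 := ⟨j - 1, by omega⟩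
      exact highDual _ (by omega)
    · intro _
      refine ⟨fun j hj => ?_, ?_, ?_⟩
      · obtain ⟨k, rfl⟩ : ∃ k, j = k + 1 := ⟨j - 1, by omega⟩
        exact highCoh _ (by omega)
      · exact Module.Finite.equiv (LinearEquiv.ofTop _ hk).symm
      · exact Module.Projective.of_equiv (LinearEquiv.ofTop _ hk).symm
  · -- n = m + 1
    -- the equivalence cohomology (m+1) ≃ P (m+1) ⧸ range (d m)
    have hPtop : Subsingleton (P (m+2)) := hbound _ (by omega)
    have hkertop : LinearMap.ker (d (m+1)) = ⊤ :=
      Submodule.eq_top_iff'.mpr fun x => LinearMap.mem_ker.mpr (Subsingleton.elim _ _)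
    have hmap : (Submodule.comap (LinearMap.ker (d (m+1))).subtype
        (LinearMap.range (d m))).map (LinearEquiv.ofTop _ hkertop).toLinearMap = LinearMap.range (d m) := by
      ext y
      constructor
      · rintro ⟨x, hx, rfl⟩
        simpa [LinearEquiv.ofTop_apply] using hx
      · intro hy
        exact ⟨⟨y, hkertop ▸ Submodule.mem_top⟩, hy, rfl⟩
    let qe : cohomology R P d (m+1) ≃ₗ[R] (P (m+1) ⧸ LinearMap.range (d m)) :=
      Submodule.Quotient.equiv _ _ (LinearEquiv.ofTop _ hkertop) hmap
    constructor
    · rintro ⟨hvan, hfin, hproj⟩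
      -- translate hypotheses
      have hker0 : LinearMap.ker (d 0) = ⊥ := by
        have hs : Subsingleton ↥(LinearMap.ker (d 0)) := hvan 0 (by omega)
        exact (Submodule.eq_bot_iff _).mpr fun x hx =>
          congrArg Subtype.val
            (Subsingleton.elim (⟨x, hx⟩ : ↥(LinearMap.ker (d 0)))
              ⟨0, (LinearMap.ker (d 0)).zero_mem⟩)
      have hex : ∀ j, j + 1 ≠ m + 1 →
          LinearMap.ker (d (j+1)) ≤ LinearMap.range (d j) := by
        intro j hj x hx
        have hs : Subsingleton (↥(LinearMap.ker (d (j+1))) ⧸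
            Submodule.comap (LinearMap.ker (d (j+1))).subtype (LinearMap.range (d j))) :=
          hvan (j+1) hj
        have htop := Submodule.Quotient.subsingleton_iff.mp hs
        have hx' : (⟨x, hx⟩ : ↥(LinearMap.ker (d (j+1)))) ∈
            Submodule.comap (LinearMap.ker (d (j+1))).subtype (LinearMap.range (d j)) := by
          rw [htop]; trivial
        simpa using hx'
      -- projectivity of the top quotient and a section of mkQ
      have hprojZ : Module.Projective R (P (m+1) ⧸ LinearMap.range (d m)) :=
        Module.Projective.of_equiv qe
      obtain ⟨σ, hσ⟩ := Module.projective_lifting_property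
        (LinearMap.range (d m)).mkQ LinearMap.id (Submodule.mkQ_surjective _)
      -- base of descending induction
      have hbase : ∃ t' : P (m+1) →ₗ[R] P m, (d m) ∘ₗ (t' ∘ₗ (d m)) = d m := by
        have hrange : ∀ x, ((LinearMap.id : P (m+1) →ₗ[R] P (m+1)) - σ ∘ₗ (LinearMap.range (d m)).mkQ) x
            ∈ LinearMap.range (d m) := by
          intro x
          have h1 := LinearMap.congr_fun hσ ((LinearMap.range (d m)).mkQ x)
          simp only [LinearMap.comp_apply, LinearMap.id_apply] at h1
          have h2 : (LinearMap.range (d m)).mkQ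
              (((LinearMap.id : P (m+1) →ₗ[R] P (m+1)) - σ ∘ₗ (LinearMap.range (d m)).mkQ) x)
              = 0 := by
            simp only [LinearMap.sub_apply, map_sub, LinearMap.comp_apply, LinearMap.id_apply]
            rw [h1, sub_self]
          rwa [Submodule.mkQ_apply, Submodule.Quotient.mk_eq_zero] at h2
        obtain ⟨t, ht⟩ := auxLift (d m) _ hrange
        refine ⟨t, ?_⟩
        ext x
        have h2 := LinearMap.congr_fun ht (d m x)
        simp only [LinearMap.comp_apply, LinearMap.sub_apply, LinearMap.id_apply] at h2 ⊢
        rw [h2]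
        have h3 : (LinearMap.range (d m)).mkQ (d m x) = 0 := by
          rw [Submodule.mkQ_apply, Submodule.Quotient.mk_eq_zero]
          exact ⟨x, rfl⟩
        rw [h3, map_zero, sub_zero]
      -- the inductive step producing homotopy pairs
      have stepPair : ∀ j, (∃ t' : P (j+2) →ₗ[R] P (j+1),
            (d (j+1)) ∘ₗ (t' ∘ₗ (d (j+1))) = d (j+1)) →
          LinearMap.ker (d (j+1)) ≤ LinearMap.range (d j) →
          ∃ t : P (j+1) →ₗ[R] P j, ∃ t' : P (j+2) →ₗ[R] P (j+1),
            (d j) ∘ₗ t + t' ∘ₗ (d (j+1)) = LinearMap.id := by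
        rintro j ⟨t', ht'⟩ hexj
        have hr : ∀ x, ((LinearMap.id : P (j+1) →ₗ[R] P (j+1)) - t' ∘ₗ (d (j+1))) x ∈ LinearMap.range (d j) := by
          intro x
          apply hexj
          rw [LinearMap.mem_ker]
          have h1 := LinearMap.congr_fun ht' x
          simp only [LinearMap.comp_apply] at h1
          simp [LinearMap.sub_apply, map_sub, h1]
        obtain ⟨t, ht⟩ := auxLift (d j) _ hr
        exact ⟨t, t', by rw [ht, sub_add_cancel]⟩
      -- descending induction
      have down : ∀ k j, j + k = m → ∃ t' : P (j+1) →ₗ[R] P j,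
          (d j) ∘ₗ (t' ∘ₗ (d j)) = d j := by
        intro k
        induction k with
        | zero =>
          intro j hj
          obtain rfl : j = m := by omega
          exact hbase
        | succ k ih =>
          intro j hj
          obtain ⟨t, t', hp⟩ := stepPair j (ih (j+1) (by omega)) (hex j (by omega))
          refine ⟨t, ?_⟩
          have h1 : (d j) ∘ₗ t = LinearMap.id - t' ∘ₗ (d (j+1)) := eq_sub_of_add_eq hp
          ext x
          have h2 := LinearMap.congr_fun h1 (d j x)
          simp only [LinearMap.comp_apply, LinearMap.sub_apply, LinearMap.id_apply] at h2 ⊢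
          rw [h2]
          have h3 : d (j+1) (d j x) = 0 := by
            have h4 := LinearMap.congr_fun (hdd j) x
            simpa [LinearMap.comp_apply] using h4
          rw [h3, map_zero, sub_zero]
      have pairs : ∀ j, j < m → ∃ t : P (j+1) →ₗ[R] P j, ∃ t' : P (j+2) →ₗ[R] P (j+1),
          (d j) ∘ₗ t + t' ∘ₗ (d (j+1)) = LinearMap.id :=
        fun j hj => stepPair j (down (m - (j+1)) (j+1) (by omega)) (hex j (by omega))
      have E1 : ∃ t' : P 1 →ₗ[R] P 0, t' ∘ₗ (d 0) = LinearMap.id := by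
        obtain ⟨t', ht'⟩ := down m 0 (by omega)
        refine ⟨t', ?_⟩
        ext x
        have h1 := LinearMap.congr_fun ht' x
        simp only [LinearMap.comp_apply, LinearMap.id_apply] at h1 ⊢
        have h2 : t' (d 0 x) - x ∈ LinearMap.ker (d 0) := by
          rw [LinearMap.mem_ker, map_sub, h1, sub_self]
        rw [hker0, Submodule.mem_bot, sub_eq_zero] at h2
        exact h2
      -- conclude: dual homology vanishes away from m+1
      intro j hj
      match j, hj with
      | 0, hj =>
        obtain ⟨t', ht'⟩ := E1
        have htop : LinearMap.range (LinearMap.lcomp R R (d 0)) = ⊤ := by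
          rw [Submodule.eq_top_iff']
          intro φ
          refine ⟨φ ∘ₗ t', ?_⟩
          ext x
          have h1 := LinearMap.congr_fun ht' x
          simp only [LinearMap.comp_apply, LinearMap.id_apply] at h1
          simp [LinearMap.lcomp_apply, LinearMap.comp_apply, h1]
        exact Submodule.Quotient.subsingleton_iff.mpr htop
      | (k+1), hj =>
        by_cases hk : k < m
        · obtain ⟨t, t', hp⟩ := pairs k hk
          have htop : Submodule.comap (LinearMap.ker (LinearMap.lcomp R R (d k))).subtype
              (LinearMap.range (LinearMap.lcomp R R (d (k+1)))) = ⊤ := by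
            rw [Submodule.eq_top_iff']
            rintro ⟨φ, hφ⟩
            rw [Submodule.mem_comap]
            refine ⟨φ ∘ₗ t', ?_⟩
            ext x
            have h1 := LinearMap.congr_fun hp x
            simp only [LinearMap.add_apply, LinearMap.comp_apply, LinearMap.id_apply] at h1
            have h2 : φ (d k (t x)) = 0 := by
              have h3 := LinearMap.congr_fun (LinearMap.mem_ker.mp hφ) (t x)
              simpa [LinearMap.lcomp_apply] using h3
            simp only [LinearMap.lcomp_apply, LinearMap.comp_apply, Submodule.coe_subtype]
            have h4 : t' ((d (k+1)) x) = x - (d k) (t x) := eq_sub_of_add_eq' h1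
            rw [h4, map_sub, h2, sub_zero]
          exact Submodule.Quotient.subsingleton_iff.mpr htop
        · exact highDual _ (by omega)

    · intro hdual
      -- dual exactness data
      have hsurj0 : Function.Surjective (LinearMap.lcomp R R (d 0)) := by
        have hs : Subsingleton ((P 0 →ₗ[R] R) ⧸
            LinearMap.range (LinearMap.lcomp R R (d 0))) := hdual 0 (by omega)
        exact LinearMap.range_eq_top.mp (Submodule.Quotient.subsingleton_iff.mp hs)
      have hdex : ∀ j, j + 1 ≤ m → ∀ φ, φ ∈ LinearMap.ker (LinearMap.lcomp R R (d j)) →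
          φ ∈ LinearMap.range (LinearMap.lcomp R R (d (j+1))) := by
        intro j hj φ hφ
        have hs : Subsingleton (@HasQuotient.Quotient ↥(LinearMap.ker (LinearMap.lcomp R R (d j))) _
            (@Submodule.hasQuotient R _ _ (Submodule.addCommGroup _) _)
            (Submodule.comap (LinearMap.ker (LinearMap.lcomp R R (d j))).subtype
              (LinearMap.range (LinearMap.lcomp R R (d (j+1)))))) := hdual (j+1) (by omega)
        have htop := Submodule.Quotient.subsingleton_iff.mp hs
        have h1 : (⟨φ, hφ⟩ : ↥(LinearMap.ker (LinearMap.lcomp R R (d j)))) ∈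
            Submodule.comap (LinearMap.ker (LinearMap.lcomp R R (d j))).subtype
              (LinearMap.range (LinearMap.lcomp R R (d (j+1)))) := by rw [htop]; trivial
        simpa using h1
      have hδδ : ∀ j (φ : P (j+2) →ₗ[R] R),
          (LinearMap.lcomp R R (d j)) ((LinearMap.lcomp R R (d (j+1))) φ) = 0 := by
        intro j φ
        refine LinearMap.ext fun x => ?_
        have h6 := LinearMap.congr_fun (hdd j) x
        simp only [LinearMap.comp_apply, LinearMap.zero_apply] at h6
        simp [LinearMap.lcomp_apply, LinearMap.comp_apply, h6]
      -- ascending induction on the dual complex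
      have up : ∀ j, j ≤ m → ∃ h : (P j →ₗ[R] R) →ₗ[R] (P (j+1) →ₗ[R] R),
          (LinearMap.lcomp R R (d j)) ∘ₗ (h ∘ₗ (LinearMap.lcomp R R (d j)))
            = LinearMap.lcomp R R (d j) := by
        intro j
        induction j with
        | zero =>
          intro _
          obtain ⟨h, hh⟩ := Module.projective_lifting_property (LinearMap.lcomp R R (d 0))
            LinearMap.id hsurj0
          refine ⟨h, ?_⟩
          rw [← LinearMap.comp_assoc, hh, LinearMap.id_comp]
        | succ j ih =>
          intro hle
          obtain ⟨h', hh'⟩ := ih (by omega)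
          have hr : ∀ φ, ((LinearMap.id : (P (j+1) →ₗ[R] R) →ₗ[R] (P (j+1) →ₗ[R] R))
              - h' ∘ₗ (LinearMap.lcomp R R (d j))) φ
              ∈ LinearMap.range (LinearMap.lcomp R R (d (j+1))) := by
            intro φ
            apply hdex j hle
            rw [LinearMap.mem_ker]
            have h1 := LinearMap.congr_fun hh' φ
            simp only [LinearMap.comp_apply] at h1
            simp [LinearMap.sub_apply, map_sub, h1]
          obtain ⟨h, hh⟩ := auxLift (LinearMap.lcomp R R (d (j+1))) _ hr
          refine ⟨h, ?_⟩
          refine LinearMap.ext fun φ => ?_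
          have h2 := LinearMap.congr_fun hh ((LinearMap.lcomp R R (d (j+1))) φ)
          simp only [LinearMap.comp_apply, LinearMap.sub_apply, LinearMap.id_apply] at h2 ⊢
          rw [h2, hδδ j φ, map_zero, sub_zero]
      have base0 : ∃ h0 : (P 0 →ₗ[R] R) →ₗ[R] (P 1 →ₗ[R] R),
          (LinearMap.lcomp R R (d 0)) ∘ₗ h0 = LinearMap.id :=
        Module.projective_lifting_property (LinearMap.lcomp R R (d 0)) LinearMap.id hsurj0
      have pairsStar : ∀ j, j + 1 ≤ m →
          ∃ h : (P (j+1) →ₗ[R] R) →ₗ[R] (P (j+2) →ₗ[R] R),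
          ∃ h' : (P j →ₗ[R] R) →ₗ[R] (P (j+1) →ₗ[R] R),
          (LinearMap.lcomp R R (d (j+1))) ∘ₗ h + h' ∘ₗ (LinearMap.lcomp R R (d j))
            = LinearMap.id := by
        intro j hj
        obtain ⟨h', hh'⟩ := up j (by omega)
        have hr : ∀ φ, ((LinearMap.id : (P (j+1) →ₗ[R] R) →ₗ[R] (P (j+1) →ₗ[R] R))
            - h' ∘ₗ (LinearMap.lcomp R R (d j))) φ
            ∈ LinearMap.range (LinearMap.lcomp R R (d (j+1))) := by
          intro φ
          apply hdex j hj
          rw [LinearMap.mem_ker]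
          have h1 := LinearMap.congr_fun hh' φ
          simp only [LinearMap.comp_apply] at h1
          simp [LinearMap.sub_apply, map_sub, h1]
        obtain ⟨h, hh⟩ := auxLift (LinearMap.lcomp R R (d (j+1))) _ hr
        exact ⟨h, h', by rw [hh]; exact sub_add_cancel (LinearMap.id : (P (j+1) →ₗ[R] R) →ₗ[R] (P (j+1) →ₗ[R] R)) _⟩
      -- transport to the primal complex through double duals
      have E1 : ∃ t1 : P 1 →ₗ[R] P 0, t1 ∘ₗ (d 0) = LinearMap.id := by
        obtain ⟨h0, hh0⟩ := base0
        refine ⟨(Module.evalEquiv R (P 0)).symm.toLinearMap ∘ₗ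
          ((LinearMap.lcomp R R h0) ∘ₗ (Module.evalEquiv R (P 1)).toLinearMap), ?_⟩
        refine LinearMap.ext fun x => ?_
        simp only [LinearMap.comp_apply, LinearMap.id_apply, LinearEquiv.coe_coe]
        have e1 := auxConj h0 (d 0 x) (R := R)
        -- t1 (d 0 x) = x by duality
        apply (Module.bijective_dual_eval R (P 0)).injective
        refine LinearMap.ext fun φ => ?_
        simp only [Module.Dual.eval_apply]
        rw [auxConj h0 (d 0 x) φ]
        have h1 := LinearMap.congr_fun (LinearMap.congr_fun hh0 φ) x
        simp only [LinearMap.comp_apply, LinearMap.id_apply, LinearMap.lcomp_apply] at h1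
        exact h1
      have pairsP : ∀ j, j + 1 ≤ m →
          ∃ t : P (j+1) →ₗ[R] P j, ∃ t' : P (j+2) →ₗ[R] P (j+1),
            (d j) ∘ₗ t + t' ∘ₗ (d (j+1)) = LinearMap.id := by
        intro j hj
        obtain ⟨h, h', hp⟩ := pairsStar j hj
        refine ⟨(Module.evalEquiv R (P j)).symm.toLinearMap ∘ₗ
            ((LinearMap.lcomp R R h') ∘ₗ (Module.evalEquiv R (P (j+1))).toLinearMap),
          (Module.evalEquiv R (P (j+1))).symm.toLinearMap ∘ₗ
            ((LinearMap.lcomp R R h) ∘ₗ (Module.evalEquiv R (P (j+2))).toLinearMap), ?_⟩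
        refine LinearMap.ext fun x => ?_
        simp only [LinearMap.add_apply, LinearMap.comp_apply, LinearMap.id_apply,
          LinearEquiv.coe_coe]
        apply (Module.bijective_dual_eval R (P (j+1))).injective
        refine LinearMap.ext fun φ => ?_
        simp only [map_add, LinearMap.add_apply, Module.Dual.eval_apply]
        rw [auxConj h (d (j+1) x) φ]
        have a1 : φ ((d j) ((Module.evalEquiv R (P j)).symm
            ((LinearMap.lcomp R R h') ((Module.evalEquiv R (P (j+1))) x))))
            = (h' ((LinearMap.lcomp R R (d j)) φ)) x := by
          rw [show φ ((d j) ((Module.evalEquiv R (P j)).symm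
              ((LinearMap.lcomp R R h') ((Module.evalEquiv R (P (j+1))) x))))
            = ((LinearMap.lcomp R R (d j)) φ) ((Module.evalEquiv R (P j)).symm
              ((LinearMap.lcomp R R h') ((Module.evalEquiv R (P (j+1))) x))) from rfl]
          rw [auxConj h' x ((LinearMap.lcomp R R (d j)) φ)]
        rw [a1]
        have h1 := LinearMap.congr_fun (LinearMap.congr_fun hp φ) x
        simp only [LinearMap.add_apply, LinearMap.comp_apply, LinearMap.id_apply,
          LinearMap.lcomp_apply] at h1
        rw [show (h φ) ((d (j+1)) x) = ((LinearMap.lcomp R R (d (j+1))) (h φ)) x from rfl]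
        calc (h' ((LinearMap.lcomp R R (d j)) φ)) x
              + ((LinearMap.lcomp R R (d (j+1))) (h φ)) x
            = ((LinearMap.lcomp R R (d (j+1))) (h φ)) x
              + (h' ((LinearMap.lcomp R R (d j)) φ)) x := add_comm _ _
          _ = φ x := h1
      -- the top invariant on the primal side
      have ginvTop : ∃ tt : P (m+1) →ₗ[R] P m, (d m) ∘ₗ (tt ∘ₗ (d m)) = d m := by
        obtain ⟨h', hh'⟩ := up m (le_refl m)
        refine ⟨(Module.evalEquiv R (P m)).symm.toLinearMap ∘ₗ
          ((LinearMap.lcomp R R h') ∘ₗ (Module.evalEquiv R (P (m+1))).toLinearMap), ?_⟩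
        refine LinearMap.ext fun x => ?_
        simp only [LinearMap.comp_apply, LinearEquiv.coe_coe]
        apply (Module.bijective_dual_eval R (P (m+1))).injective
        refine LinearMap.ext fun φ => ?_
        simp only [Module.Dual.eval_apply]
        rw [show φ ((d m) ((Module.evalEquiv R (P m)).symm
            ((LinearMap.lcomp R R h') ((Module.evalEquiv R (P (m+1))) ((d m) x)))))
          = ((LinearMap.lcomp R R (d m)) φ) ((Module.evalEquiv R (P m)).symm
            ((LinearMap.lcomp R R h') ((Module.evalEquiv R (P (m+1))) ((d m) x)))) from rfl]
        rw [auxConj h' ((d m) x) ((LinearMap.lcomp R R (d m)) φ)]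
        have h1 := LinearMap.congr_fun (LinearMap.congr_fun hh' φ) x
        simp only [LinearMap.comp_apply, LinearMap.lcomp_apply] at h1
        exact h1
      obtain ⟨tt, htt⟩ := ginvTop
      -- a section of the top quotient
      have hkerQ : LinearMap.range (d m) ≤ LinearMap.ker
          ((LinearMap.id : P (m+1) →ₗ[R] P (m+1)) - (d m) ∘ₗ tt) := by
        rintro _ ⟨y, rfl⟩
        rw [LinearMap.mem_ker]
        have h1 := LinearMap.congr_fun htt y
        simp only [LinearMap.comp_apply] at h1
        simp [LinearMap.sub_apply, h1]
      have hsec : (LinearMap.range (d m)).mkQ ∘ₗ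
          (Submodule.liftQ _ _ hkerQ) = LinearMap.id := by
        refine Submodule.linearMap_qext _ ?_
        refine LinearMap.ext fun x => ?_
        simp only [LinearMap.comp_apply, Submodule.mkQ_apply, LinearMap.id_apply,
          Submodule.liftQ_apply, LinearMap.sub_apply]
        refine (Submodule.Quotient.eq _).mpr ?_
        have h7 : x - (d m) (tt x) - x = -((d m) (tt x)) := by abel
        rw [h7]
        exact Submodule.neg_mem _ ⟨tt x, rfl⟩
      have hfinZ : Module.Finite R (P (m+1) ⧸ LinearMap.range (d m)) :=
        Module.Finite.of_surjective (LinearMap.range (d m)).mkQ (Submodule.mkQ_surjective _)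
      have hprojZ : Module.Projective R (P (m+1) ⧸ LinearMap.range (d m)) :=
        Module.Projective.of_split (Submodule.liftQ _ _ hkerQ)
          (LinearMap.range (d m)).mkQ hsec
      refine ⟨fun j hj => ?_, Module.Finite.equiv qe.symm, Module.Projective.of_equiv qe.symm⟩
      match j, hj with
      | 0, hj =>
        obtain ⟨t1, ht1⟩ := E1
        have hker0 : LinearMap.ker (d 0) = ⊥ := by
          rw [Submodule.eq_bot_iff]
          intro x hx
          have h1 := LinearMap.congr_fun ht1 x
          simp only [LinearMap.comp_apply, LinearMap.id_apply] at h1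
          rw [LinearMap.mem_ker] at hx
          rw [← h1, hx, map_zero]
        have hss : Subsingleton ↥(LinearMap.ker (d 0)) := by
          refine ⟨fun a b => Subtype.ext ?_⟩
          have ha := (Submodule.eq_bot_iff _).mp hker0 _ a.2
          have hb := (Submodule.eq_bot_iff _).mp hker0 _ b.2
          rw [ha, hb]
        exact hss
      | (k+1), hj =>
        by_cases hk : k + 1 ≤ m
        · obtain ⟨t, t', hp⟩ := pairsP k hk
          have htop : Submodule.comap (LinearMap.ker (d (k+1))).subtype
              (LinearMap.range (d k)) = ⊤ := by
            rw [Submodule.eq_top_iff']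
            rintro ⟨x, hx⟩
            rw [Submodule.mem_comap]
            have h1 := LinearMap.congr_fun hp x
            simp only [LinearMap.add_apply, LinearMap.comp_apply, LinearMap.id_apply] at h1
            refine ⟨t x, ?_⟩
            rw [LinearMap.mem_ker] at hx
            simpa [hx, Submodule.coe_subtype] using h1
          exact Submodule.Quotient.subsingleton_iff.mpr htop
        · exact highCoh _ (by omega)
end

section
/- Let p be a prime and let G be a finite abelian p-group with G ≠ 0 and pG ≠ 0. Then the reduced simplicial homology of the order complex of proper nontrivial subgroups of G vanishes in every degree: H̃_q(C̃_•(P_G)) = 0 for all q ≥ −1. -/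
namespace OrderComplex

variable (V : Type) [Preorder V]

/-- The `q`-simplices of the order complex of `V`: strictly increasing chains
`v 0 < v 1 < ⋯ < v q` of elements of `V`. -/
def Simplex (q : ℕ) : Type _ := {f : Fin (q + 1) → V // StrictMono f}

/-- The group `C̃_q` of `q`-chains: the free abelian group on the `q`-simplices. -/
abbrev Chains (q : ℕ) : Type _ := Simplex V q →₀ ℤ

variable {V}

/-- The `i`-th face of a simplex, obtained by omitting its `i`-th vertex. -/
def face {q : ℕ} (s : Simplex V (q + 1)) (i : Fin (q + 2)) : Simplex V q :=
  ⟨s.1 ∘ i.succAbove, s.2.comp (Fin.strictMono_succAbove i)⟩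

variable (V)

/-- The simplicial boundary map `∂ : C̃_{q+1} → C̃_q`, the alternating sum of the face maps. -/
noncomputable def boundary (q : ℕ) : Chains V (q + 1) →ₗ[ℤ] Chains V q :=
  Finsupp.linearCombination ℤ fun s : Simplex V (q + 1) =>
    ∑ i : Fin (q + 2), ((-1 : ℤ) ^ (i : ℕ)) • Finsupp.single (face s i) 1

/-- The augmentation `C̃_0 → C̃_{-1} = ℤ`, sending each vertex to `1`. -/
noncomputable def augment : Chains V 0 →ₗ[ℤ] ℤ :=
  Finsupp.linearCombination ℤ fun _ : Simplex V 0 => (1 : ℤ)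

/-- The homology of the augmented chain complex
`⋯ → C̃_1 → C̃_0 → C̃_{-1} = ℤ → 0`, indexed so that `reducedHomology V n` is the homology
`H̃_{n-1}` at the term `C̃_{n-1}` (so `n = 0` corresponds to the term `ℤ` in degree `-1`).
Since no differential is available out of degree `-1`, homology in an ambient degree `q` is
`ker ∂ / (im ∂ ∩ ker ∂)`, which agrees with `ker ∂ / im ∂` since `∂ ∘ ∂ = 0`. -/
noncomputable def reducedHomology : ℕ → Type _
  | 0 => ℤ ⧸ LinearMap.range (augment V)
  | 1 => ↥(LinearMap.ker (augment V)) ⧸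
      Submodule.comap (LinearMap.ker (augment V)).subtype (LinearMap.range (boundary V 0))
  | (q + 2) => ↥(LinearMap.ker (boundary V q)) ⧸
      Submodule.comap (LinearMap.ker (boundary V q)).subtype
        (LinearMap.range (boundary V (q + 1)))

noncomputable instance : ∀ n, AddCommGroup (reducedHomology V n)
  | 0 => inferInstanceAs (AddCommGroup (ℤ ⧸ LinearMap.range (augment V)))
  | 1 => inferInstanceAs (AddCommGroup (↥(LinearMap.ker (augment V)) ⧸
      Submodule.comap (LinearMap.ker (augment V)).subtype (LinearMap.range (boundary V 0))))
  | (q + 2) => inferInstanceAs (AddCommGroup (↥(LinearMap.ker (boundary V q)) ⧸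
      Submodule.comap (LinearMap.ker (boundary V q)).subtype
        (LinearMap.range (boundary V (q + 1)))))

noncomputable instance : ∀ n, Module ℤ (reducedHomology V n)
  | 0 => inferInstanceAs (Module ℤ (ℤ ⧸ LinearMap.range (augment V)))
  | 1 => inferInstanceAs (Module ℤ (↥(LinearMap.ker (augment V)) ⧸
      Submodule.comap (LinearMap.ker (augment V)).subtype (LinearMap.range (boundary V 0))))
  | (q + 2) => inferInstanceAs (Module ℤ (↥(LinearMap.ker (boundary V q)) ⧸
      Submodule.comap (LinearMap.ker (boundary V q)).subtype
        (LinearMap.range (boundary V (q + 1)))))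

end OrderComplex

namespace StmtAux

open Finsupp

variable {V : Type}

/-- chains with `n` vertices: free abelian group on all functions `Fin n → V`. -/
abbrev FC (V : Type) (n : ℕ) : Type := (Fin n → V) →₀ ℤ

lemma lhom_single_ext {α : Type*} {M : Type*} [AddCommGroup M] [Module ℤ M]
    {φ ψ : (α →₀ ℤ) →ₗ[ℤ] M} (h : ∀ a, φ (single a 1) = ψ (single a 1)) : φ = ψ :=
  Finsupp.lhom_ext fun a b => by
    rw [show (Finsupp.single a b) = b • Finsupp.single a (1:ℤ) by simp, φ.map_smul, ψ.map_smul, h]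

variable (V) in
noncomputable def fb (n : ℕ) : FC V (n+1) →ₗ[ℤ] FC V n :=
  Finsupp.linearCombination ℤ fun g : Fin (n+1) → V =>
    ∑ i : Fin (n+1), ((-1 : ℤ) ^ (i : ℕ)) • Finsupp.single (g ∘ i.succAbove) 1

noncomputable def consL (v : V) (n : ℕ) : FC V n →ₗ[ℤ] FC V (n+1) :=
  Finsupp.linearCombination ℤ fun g : Fin n → V => Finsupp.single (Fin.cons v g) 1

noncomputable def fmapL (f : V → V) (n : ℕ) : FC V n →ₗ[ℤ] FC V n :=
  Finsupp.linearCombination ℤ fun g : Fin n → V => Finsupp.single (f ∘ g) 1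

def wfun (f : V → V) {n : ℕ} (g : Fin n → V) (i : Fin n) : Fin (n+1) → V :=
  fun j => if h : (j : ℕ) ≤ (i : ℕ) then g ⟨j, lt_of_le_of_lt h i.isLt⟩
    else f (g ⟨(j : ℕ) - 1, by have := j.isLt; omega⟩)

noncomputable def hL (f : V → V) (n : ℕ) : FC V n →ₗ[ℤ] FC V (n+1) :=
  Finsupp.linearCombination ℤ fun g : Fin n → V =>
    ∑ i : Fin n, ((-1 : ℤ) ^ (i : ℕ)) • Finsupp.single (wfun f g i) 1

@[simp] lemma fb_single (n : ℕ) (g : Fin (n+1) → V) :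
    fb V n (single g 1) = ∑ i : Fin (n+1), ((-1 : ℤ) ^ (i : ℕ)) • single (g ∘ i.succAbove) 1 := by
  simp [fb]

@[simp] lemma consL_single (v : V) (n : ℕ) (g : Fin n → V) :
    consL v n (single g 1) = single (Fin.cons v g) 1 := by simp [consL]

@[simp] lemma fmapL_single (f : V → V) (n : ℕ) (g : Fin n → V) :
    fmapL f n (single g 1) = single (f ∘ g) 1 := by simp [fmapL]

@[simp] lemma hL_single (f : V → V) (n : ℕ) (g : Fin n → V) :
    hL f n (single g 1) = ∑ i : Fin n, ((-1 : ℤ) ^ (i : ℕ)) • single (wfun f g i) 1 := by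
  simp [hL]

lemma hL_zero (f : V → V) : hL f 0 = 0 := by
  apply lhom_single_ext; intro g; simp

/- face/cons combinatorial identities -/
lemma cons_comp_succAbove_zero (v : V) {n : ℕ} (t : Fin (n+1) → V) :
    (Fin.cons v t) ∘ (Fin.succAbove 0) = t := by
  funext k
  simp [Fin.succAbove_zero, Function.comp]

lemma cons_comp_succAbove_succ (v : V) {n : ℕ} (t : Fin (n+1) → V) (j : Fin (n+1)) :
    (Fin.cons v t) ∘ (Fin.succAbove j.succ) = Fin.cons v (t ∘ j.succAbove) := by
  funext k
  induction k using Fin.cases with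
  | zero => simp [Function.comp, Fin.succ_succAbove_zero]
  | succ m => simp [Function.comp, Fin.succ_succAbove_succ]

/-- E1 : `∂ (v ⬝ x) = x - v ⬝ ∂ x`. -/
lemma fb_consL (v : V) (n : ℕ) :
    (fb V (n+1)).comp (consL v (n+1)) = LinearMap.id - (consL v n).comp (fb V n) := by
  apply lhom_single_ext; intro t
  simp only [LinearMap.comp_apply, LinearMap.sub_apply, LinearMap.id_apply, consL_single,
    fb_single]
  rw [Fin.sum_univ_succ]
  simp only [Fin.val_zero, pow_zero, one_smul, cons_comp_succAbove_zero,
    cons_comp_succAbove_succ, Fin.val_succ, pow_succ, mul_comm, map_sum, map_smul, consL_single]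
  simp only [neg_one_mul, neg_smul, Finset.sum_neg_distrib, sub_eq_add_neg]

/-- E2: `fmap` is a chain map. -/
lemma fb_fmapL (f : V → V) (n : ℕ) :
    (fb V n).comp (fmapL f (n+1)) = (fmapL f n).comp (fb V n) := by
  apply lhom_single_ext; intro g
  simp only [LinearMap.comp_apply, fmapL_single, fb_single, map_sum, map_smul]
  rfl

lemma wfun_zero (f : V → V) {n : ℕ} (g : Fin (n+1) → V) :
    wfun f g 0 = Fin.cons (g 0) (f ∘ g) := by
  funext j
  induction j using Fin.cases with
  | zero => simp [wfun]
  | succ m =>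
    rw [Fin.cons_succ, Function.comp_apply,
      show wfun f g 0 m.succ = f (g ⟨(m:ℕ)+1-1, by have := m.isLt; omega⟩) from dif_neg (by simp)]
    congr 2

lemma wfun_succ (f : V → V) {n : ℕ} (g : Fin (n+1) → V) (i : Fin n) :
    wfun f g i.succ = Fin.cons (g 0) (wfun f (g ∘ Fin.succ) i) := by
  funext j
  induction j using Fin.cases with
  | zero => simp [wfun]
  | succ m =>
    simp only [Fin.cons_succ]
    by_cases h : (m : ℕ) ≤ (i : ℕ)
    · rw [show wfun f g i.succ m.succ = g ⟨(m:ℕ)+1, by omega⟩ from dif_pos (by simp [h]),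
        show wfun f (g ∘ Fin.succ) i m = (g ∘ Fin.succ) ⟨(m:ℕ), by omega⟩ from dif_pos h]
      simp only [Function.comp_apply]
      congr 1
    · rw [show wfun f g i.succ m.succ = f (g ⟨(m:ℕ)+1-1, by omega⟩) from dif_neg (by simp [h]),
        show wfun f (g ∘ Fin.succ) i m = f ((g ∘ Fin.succ) ⟨(m:ℕ)-1, by omega⟩) from dif_neg h]
      simp only [Function.comp_apply]
      congr 2
      ext
      simp only [Fin.val_succ]
      omega

/-- E3: recursion for the prism operator. -/
lemma hL_succ (f : V → V) {n : ℕ} (g : Fin (n+1) → V) :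
    hL f (n+1) (single g 1) =
      consL (g 0) (n+1) (fmapL f (n+1) (single g 1) - hL f n (single (g ∘ Fin.succ) 1)) := by
  rw [hL_single, Fin.sum_univ_succ]
  simp only [Fin.val_zero, pow_zero, one_smul, wfun_zero, wfun_succ, Fin.val_succ, pow_succ,
    map_sub, map_sum, map_smul, fmapL_single, hL_single, consL_single]
  simp only [neg_one_mul, neg_smul, Finset.sum_neg_distrib, sub_eq_add_neg, mul_comm]

lemma comp_succAbove_zero' {n : ℕ} (g : Fin (n+2) → V) :
    g ∘ Fin.succAbove 0 = g ∘ Fin.succ := by rw [Fin.succAbove_zero]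

lemma head_comp_succAbove {n : ℕ} (g : Fin (n+2) → V) (j : Fin (n+1)) :
    (g ∘ Fin.succAbove j.succ) 0 = g 0 := by
  simp [Function.comp, Fin.succ_succAbove_zero]

lemma tail_comp_succAbove {n : ℕ} (g : Fin (n+2) → V) (j : Fin (n+1)) :
    (g ∘ Fin.succAbove j.succ) ∘ Fin.succ = (g ∘ Fin.succ) ∘ Fin.succAbove j := by
  funext k
  simp [Function.comp, Fin.succ_succAbove_succ]

lemma cons_head_tail {n : ℕ} (g : Fin (n+1) → V) :
    Fin.cons (g 0) (g ∘ Fin.succ) = g := by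
  funext j
  induction j using Fin.cases <;> simp

set_option maxHeartbeats 1000000 in
/-- the prism homotopy identity. -/
theorem prism (f : V → V) (n : ℕ) :
    (fb V (n+1)).comp (hL f (n+1)) + (hL f n).comp (fb V n)
      = fmapL f (n+1) - LinearMap.id := by
  induction n with
  | zero =>
    apply lhom_single_ext; intro g
    simp only [LinearMap.add_apply, LinearMap.comp_apply, LinearMap.sub_apply,
      LinearMap.id_apply, hL_zero, LinearMap.zero_apply, fmapL_single, add_zero]
    rw [hL_single]
    rw [Fin.sum_univ_one]
    simp only [Fin.val_zero, pow_zero, one_smul, wfun_zero]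
    rw [show Finsupp.single (Fin.cons (g 0) (f ∘ g)) (1:ℤ) = consL (g 0) 1 (single (f ∘ g) 1) from
      (consL_single _ _ _).symm]
    rw [show fb V 1 (consL (g 0) 1 (single (f ∘ g) 1))
        = single (f ∘ g) 1 - consL (g 0) 0 (fb V 0 (single (f ∘ g) 1)) from
      LinearMap.ext_iff.mp (fb_consL (g 0) 0) (single (f ∘ g) 1)]
    rw [fb_single, Fin.sum_univ_one]
    simp only [Fin.val_zero, pow_zero, one_smul, consL_single]
    congr 2
    funext j
    induction j using Fin.cases with
    | zero => simp
    | succ m => exact m.elim0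
  | succ n IH =>
    apply lhom_single_ext; intro g
    set v := g 0 with hv
    set t := g ∘ Fin.succ with ht
    set S : FC V (n+1) :=
      ∑ j : Fin (n+1), ((-1:ℤ)^(j:ℕ)) • Finsupp.single (g ∘ Fin.succAbove j.succ) (1:ℤ) with hS
    have hfb : fb V (n+1) (single g 1) = single t 1 - S := by
      rw [fb_single, Fin.sum_univ_succ, comp_succAbove_zero', ← ht]
      simp only [Fin.val_zero, pow_zero, one_smul, Fin.val_succ, pow_succ, mul_comm, neg_one_mul,
        neg_smul, Finset.sum_neg_distrib, sub_eq_add_neg, hS]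
    have h1 : fb V (n+1) (hL f (n+1) (single t 1))
        = fmapL f (n+1) (single t 1) - single t 1 - hL f n (fb V n (single t 1)) := by
      have h0 := LinearMap.ext_iff.mp IH (single t 1)
      simp only [LinearMap.add_apply, LinearMap.comp_apply, LinearMap.sub_apply,
        LinearMap.id_apply] at h0
      rw [eq_sub_of_add_eq h0]
      try abel
    have hA : fb V (n+2) (hL f (n+2) (single g 1))
        = single (f ∘ g) 1 - hL f (n+1) (single t 1) + consL v (n+1) (fmapL f (n+1) S)
          - single g 1 - consL v (n+1) (hL f n (fb V n (single t 1))) := by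
      rw [hL_succ]
      rw [show fb V (n+2) (consL (g 0) (n+2)
            (fmapL f (n+2) (single g 1) - hL f (n+1) (single (g ∘ Fin.succ) 1)))
          = (fmapL f (n+2) (single g 1) - hL f (n+1) (single (g ∘ Fin.succ) 1))
            - consL (g 0) (n+1) (fb V (n+1)
              (fmapL f (n+2) (single g 1) - hL f (n+1) (single (g ∘ Fin.succ) 1))) from
        LinearMap.ext_iff.mp (fb_consL (g 0) (n+1)) _]
      rw [map_sub (fb V (n+1))]
      rw [show fb V (n+1) (fmapL f (n+2) (single g 1))
          = fmapL f (n+1) (fb V (n+1) (single g 1)) from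
        LinearMap.ext_iff.mp (fb_fmapL f (n+1)) (single g 1)]
      rw [← ht, ← hv, hfb, h1]
      have hg : consL v (n+1) (single t 1) = single g 1 := by
        rw [consL_single, hv, ht, cons_head_tail]
      simp only [map_sub, fmapL_single]
      abel_nf
      rw [hg.symm]
      abel
    have hB : hL f (n+1) (fb V (n+1) (single g 1))
        = hL f (n+1) (single t 1) - consL v (n+1) (fmapL f (n+1) S)
          + consL v (n+1) (hL f n (fb V n (single t 1))) := by
      rw [hfb, map_sub]
      have hterm : ∀ j : Fin (n+1), hL f (n+1) (single (g ∘ Fin.succAbove j.succ) 1)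
          = consL v (n+1) (fmapL f (n+1) (single (g ∘ Fin.succAbove j.succ) 1))
            - consL v (n+1) (hL f n (single (t ∘ Fin.succAbove j) 1)) := by
        intro j
        rw [hL_succ, head_comp_succAbove, tail_comp_succAbove, ← ht, ← hv, map_sub]
      rw [hS, map_sum]
      simp only [map_smul, hterm, smul_sub]
      rw [Finset.sum_sub_distrib]
      rw [show (∑ j : Fin (n+1), ((-1:ℤ)^(j:ℕ)) •
            consL v (n+1) (fmapL f (n+1) (single (g ∘ Fin.succAbove j.succ) 1)))
          = consL v (n+1) (fmapL f (n+1) S) from by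
        rw [hS, map_sum, map_sum]; simp only [map_smul]]
      rw [show (∑ j : Fin (n+1), ((-1:ℤ)^(j:ℕ)) •
            consL v (n+1) (hL f n (single (t ∘ Fin.succAbove j) 1)))
          = consL v (n+1) (hL f n (fb V n (single t 1))) from by
        rw [fb_single, map_sum, map_sum]; simp only [map_smul]]
      abel
    simp only [LinearMap.add_apply, LinearMap.comp_apply, LinearMap.sub_apply,
      LinearMap.id_apply, fmapL_single]
    rw [hA, hB]
    abel

/-- the combined contraction operator (cone over the image of `f`, minus prism). -/
noncomputable def DL (f : V → V) (c : V) (n : ℕ) : FC V n →ₗ[ℤ] FC V (n+1) :=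
  (consL c n).comp (fmapL f n) - hL f n

set_option maxHeartbeats 800000 in
theorem homotopy (f : V → V) (c : V) (n : ℕ) :
    (fb V (n+1)).comp (DL f c (n+1)) + (DL f c n).comp (fb V n) = LinearMap.id := by
  have h1 : (fb V (n+1)).comp ((consL c (n+1)).comp (fmapL f (n+1)))
      = fmapL f (n+1) - (consL c n).comp ((fmapL f n).comp (fb V n)) := by
    rw [← LinearMap.comp_assoc, fb_consL, LinearMap.sub_comp, LinearMap.id_comp,
      LinearMap.comp_assoc, fb_fmapL]
  have h2 : (fb V (n+1)).comp (hL f (n+1))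
      = fmapL f (n+1) - LinearMap.id - (hL f n).comp (fb V n) := by
    rw [← prism f n]; abel
  unfold DL
  have h3 : ((consL c n).comp (fmapL f n)).comp (fb V n)
      = (consL c n).comp ((fmapL f n).comp (fb V n)) := by
    apply LinearMap.ext; intro x; rfl
  rw [LinearMap.comp_sub, LinearMap.sub_comp, h1, h2, h3]
  abel

section Order

open OrderComplex

variable [Preorder V]

variable (V) in
open Classical in
noncomputable def nrm (n : ℕ) : FC V (n+1) →ₗ[ℤ] Chains V n :=
  Finsupp.linearCombination ℤ fun g : Fin (n+1) → V =>
    if h : StrictMono g then Finsupp.single (⟨g, h⟩ : Simplex V n) 1 else 0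

variable (V) in
noncomputable def incL (n : ℕ) : Chains V n →ₗ[ℤ] FC V (n+1) :=
  Finsupp.linearCombination ℤ fun s : Simplex V n => Finsupp.single s.1 1

lemma nrm_single_strict {n : ℕ} {g : Fin (n+1) → V} (h : StrictMono g) :
    nrm V n (single g 1) = Finsupp.single (α := Simplex V n) (⟨g, h⟩ : Simplex V n) 1 := by
  simp [nrm, dif_pos h]

lemma nrm_single_nonstrict {n : ℕ} {g : Fin (n+1) → V} (h : ¬ StrictMono g) :
    nrm V n (single g 1) = 0 := by
  simp [nrm, dif_neg h]

@[simp] lemma incL_single {n : ℕ} (s : Simplex V n) :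
    incL V n (single s 1) = single s.1 1 := by simp [incL]

lemma nrm_incL (n : ℕ) : (nrm V n).comp (incL V n) = LinearMap.id := by
  apply lhom_single_ext; intro s
  rw [LinearMap.comp_apply, incL_single, nrm_single_strict s.2]
  rfl

lemma boundary_single {n : ℕ} (s : Simplex V (n+1)) :
    boundary V n (single s 1)
      = ∑ i : Fin (n+2), ((-1 : ℤ) ^ (i : ℕ)) • Finsupp.single (face s i) 1 := by
  simp [boundary]

lemma incL_boundary (n : ℕ) :
    (incL V n).comp (boundary V n) = (fb V (n+1)).comp (incL V (n+1)) := by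
  apply lhom_single_ext; intro s
  simp only [LinearMap.comp_apply, incL_single, boundary_single, fb_single, map_sum, map_smul,
    incL_single]
  rfl

lemma exists_eq_succ_of_not_strictMono {n : ℕ} {g : Fin (n+2) → V}
    (hanti : ∀ a b : V, a ≤ b → b ≤ a → a = b)
    (hg : Monotone g) (h : ¬ StrictMono g) :
    ∃ k : Fin (n+1), g k.castSucc = g k.succ := by
  by_contra hno
  push_neg at hno
  apply h
  rw [Fin.strictMono_iff_lt_succ]
  intro i
  have hle : g i.castSucc ≤ g i.succ := hg (Fin.castSucc_lt_succ : i.castSucc < i.succ).le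
  rw [lt_iff_le_not_ge]
  refine ⟨hle, fun hba => hno i (hanti _ _ hle hba)⟩

lemma faces_eq_of_eq {n : ℕ} {g : Fin (n+2) → V} {k : Fin (n+1)}
    (hk : g k.castSucc = g k.succ) :
    g ∘ (k.castSucc).succAbove = g ∘ (k.succ).succAbove := by
  funext m
  simp only [Function.comp_apply]
  rcases lt_trichotomy (m : ℕ) (k : ℕ) with hmk | hmk | hmk
  · rw [Fin.succAbove_of_castSucc_lt _ _ (by rw [Fin.lt_def]; simpa using hmk),
      Fin.succAbove_of_castSucc_lt _ _ (by rw [Fin.lt_def]; simp; omega)]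
  · rw [Fin.succAbove_of_le_castSucc _ _ (by rw [Fin.le_def]; simp; omega),
      Fin.succAbove_of_castSucc_lt _ _ (by rw [Fin.lt_def]; simp; omega)]
    have h1 : m.succ = k.succ := by rw [Fin.ext_iff]; simp; omega
    have h2 : m.castSucc = k.castSucc := by rw [Fin.ext_iff]; simpa using hmk
    rw [h1, h2, hk]
  · rw [Fin.succAbove_of_le_castSucc _ _ (by rw [Fin.le_def]; simp; omega),
      Fin.succAbove_of_le_castSucc _ _ (by rw [Fin.le_def]; simp; omega)]

lemma face_not_strictMono {n : ℕ} {g : Fin (n+2) → V} {k : Fin (n+1)}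
    (hk : g k.castSucc = g k.succ) {i : Fin (n+2)}
    (h1 : i ≠ k.castSucc) (h2 : i ≠ k.succ) :
    ¬ StrictMono (g ∘ i.succAbove) := by
  intro hsm
  obtain ⟨j₁, hj₁⟩ := Fin.exists_succAbove_eq (Ne.symm h1)
  obtain ⟨j₂, hj₂⟩ := Fin.exists_succAbove_eq (Ne.symm h2)
  have hjj : j₁ ≠ j₂ := by
    intro he; rw [he, hj₂] at hj₁
    exact (Fin.castSucc_lt_succ : k.castSucc < k.succ).ne (hj₁.symm ▸ rfl)
  have hval : (g ∘ i.succAbove) j₁ = (g ∘ i.succAbove) j₂ := by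
    simp only [Function.comp_apply, hj₁, hj₂, hk]
  rcases lt_or_gt_of_ne hjj with hlt | hlt
  · exact (ne_of_lt (hsm hlt)) hval
  · exact (ne_of_lt (hsm hlt)) hval.symm

set_option maxHeartbeats 1000000 in
lemma nrm_fb (hanti : ∀ a b : V, a ≤ b → b ≤ a → a = b) {n : ℕ}
    (g : Fin (n+2) → V) (hg : Monotone g) :
    boundary V n (nrm V (n+1) (single g 1)) = nrm V n (fb V (n+1) (single g 1)) := by
  by_cases hstrict : StrictMono g
  · rw [nrm_single_strict hstrict]
    erw [boundary_single]
    rw [fb_single, map_sum]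
    apply Finset.sum_congr rfl
    intro i _
    rw [map_smul, nrm_single_strict (hstrict.comp (Fin.strictMono_succAbove i))]
    rfl
  · rw [nrm_single_nonstrict hstrict, map_zero, fb_single, map_sum]
    obtain ⟨k, hk⟩ := exists_eq_succ_of_not_strictMono hanti hg hstrict
    symm
    simp only [map_smul]
    have hcs : (k.castSucc : Fin (n+2)) ≠ k.succ := (Fin.castSucc_lt_succ : k.castSucc < k.succ).ne
    have hfaces : g ∘ Fin.succAbove k.castSucc = g ∘ Fin.succAbove k.succ :=
      faces_eq_of_eq hk
    have hcoef : ((-1:ℤ)^((k.castSucc : Fin (n+2)) : ℕ) + (-1:ℤ)^((k.succ : Fin (n+2)) : ℕ))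
        = 0 := by
      simp [Fin.coe_castSucc, Fin.val_succ, pow_succ]
    apply Finset.sum_involution
      (g := fun i _ => if i = k.castSucc then k.succ else if i = k.succ then k.castSucc else i)
    · intro i _
      by_cases e1 : i = k.castSucc
      · subst e1
        rw [if_pos rfl, hfaces, ← add_smul, hcoef, zero_smul]
      · by_cases e2 : i = k.succ
        · subst e2
          rw [if_neg (Ne.symm hcs), if_pos rfl, hfaces, ← add_smul, add_comm, hcoef, zero_smul]
        · rw [if_neg e1, if_neg e2,
            nrm_single_nonstrict (face_not_strictMono hk e1 e2), smul_zero, add_zero]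
    · intro i _ hne
      by_cases e1 : i = k.castSucc
      · subst e1; rw [if_pos rfl]; exact Ne.symm hcs
      · by_cases e2 : i = k.succ
        · subst e2; rw [if_neg (Ne.symm hcs), if_pos rfl]; exact hcs
        · exfalso
          exact hne (by rw [nrm_single_nonstrict (face_not_strictMono hk e1 e2), smul_zero])
    · intro i _; exact Finset.mem_univ _
    · intro i _
      by_cases e1 : i = k.castSucc
      · subst e1; simp [Ne.symm hcs]
      · by_cases e2 : i = k.succ
        · subst e2; simp [Ne.symm hcs, e1]
        · simp [e1, e2]

lemma mono_cons {n : ℕ} {v : V} {u : Fin n → V} (h0 : ∀ k, v ≤ u k) (hu : Monotone u) :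
    Monotone (Fin.cons v u) := by
  intro a b hab
  induction a using Fin.cases with
  | zero =>
    induction b using Fin.cases with
    | zero => exact le_refl _
    | succ k => simpa using h0 k
  | succ j =>
    induction b using Fin.cases with
    | zero =>
      exfalso; rw [Fin.le_def] at hab; simp at hab
    | succ k =>
      simp only [Fin.cons_succ]
      exact hu (by rw [Fin.le_def] at hab ⊢; simpa using hab)

lemma mono_wfun {f : V → V} (hf : Monotone f) (hle : ∀ x, x ≤ f x) {n : ℕ}
    {g : Fin n → V} (hg : Monotone g) (i : Fin n) : Monotone (wfun f g i) := by
  intro a b hab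
  rw [Fin.le_def] at hab
  by_cases ha : (a : ℕ) ≤ (i : ℕ)
  · by_cases hb : (b : ℕ) ≤ (i : ℕ)
    · rw [show wfun f g i a = g ⟨a, by omega⟩ from dif_pos ha,
        show wfun f g i b = g ⟨b, by omega⟩ from dif_pos hb]
      exact hg (by rw [Fin.le_def]; simpa using hab)
    · rw [show wfun f g i a = g ⟨a, by omega⟩ from dif_pos ha,
        show wfun f g i b = f (g ⟨(b:ℕ)-1, by have := b.2; omega⟩) from dif_neg hb]
      refine le_trans (hg ?_) (hle _)
      rw [Fin.le_def]; simp; omega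
  · by_cases hb : (b : ℕ) ≤ (i : ℕ)
    · exfalso; omega
    · rw [show wfun f g i a = f (g ⟨(a:ℕ)-1, by have := a.2; omega⟩) from dif_neg ha,
        show wfun f g i b = f (g ⟨(b:ℕ)-1, by have := b.2; omega⟩) from dif_neg hb]
      refine hf (hg ?_)
      rw [Fin.le_def]; simp; omega

lemma DL_single (f : V → V) (c : V) {n : ℕ} (u : Fin (n+1) → V) :
    DL f c (n+1) (single u 1) = single (Fin.cons c (f ∘ u)) 1
      - ∑ i : Fin (n+1), ((-1:ℤ)^(i:ℕ)) • single (wfun f u i) 1 := by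
  simp only [DL, LinearMap.sub_apply, LinearMap.comp_apply, fmapL_single, consL_single,
    hL_single]

lemma key_comm (hanti : ∀ a b : V, a ≤ b → b ≤ a → a = b)
    {f : V → V} {c : V} (hf : Monotone f) (hle : ∀ x, x ≤ f x) (hc : ∀ x, c ≤ f x) (n : ℕ) :
    (boundary V n).comp ((nrm V (n+1)).comp ((DL f c (n+1)).comp (incL V n)))
      = (nrm V n).comp ((fb V (n+1)).comp ((DL f c (n+1)).comp (incL V n))) := by
  apply lhom_single_ext; intro s
  simp only [LinearMap.comp_apply, incL_single, DL_single]
  rw [map_sub (nrm V (n+1)), map_sub (boundary V n), map_sub (fb V (n+1)), map_sub (nrm V n)]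
  congr 1
  · exact nrm_fb hanti _ (mono_cons (fun k => hc (s.1 k)) (hf.comp s.2.monotone))
  · rw [map_sum, map_sum, map_sum, map_sum]
    apply Finset.sum_congr rfl
    intro i _
    rw [map_smul, map_smul, map_smul, map_smul]
    exact congrArg _ (nrm_fb hanti _ (mono_wfun hf hle s.2.monotone i))

variable (V) in
noncomputable def DD (f : V → V) (c : V) (n : ℕ) : Chains V n →ₗ[ℤ] Chains V (n+1) :=
  (nrm V (n+1)).comp ((DL f c (n+1)).comp (incL V n))

lemma claimA (hanti : ∀ a b : V, a ≤ b → b ≤ a → a = b)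
    {f : V → V} {c : V} (hf : Monotone f) (hle : ∀ x, x ≤ f x) (hc : ∀ x, c ≤ f x) (n : ℕ)
    (x : Chains V (n+1)) :
    boundary V (n+1) (DD V f c (n+1) x) + DD V f c n (boundary V n x) = x := by
  have h1 : boundary V (n+1) (DD V f c (n+1) x)
      = nrm V (n+1) (fb V (n+2) (DL f c (n+2) (incL V (n+1) x))) :=
    LinearMap.ext_iff.mp (key_comm hanti hf hle hc (n+1)) x
  have h2 : incL V n (boundary V n x) = fb V (n+1) (incL V (n+1) x) :=
    LinearMap.ext_iff.mp (incL_boundary n) x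
  have h3 : DD V f c n (boundary V n x)
      = nrm V (n+1) (DL f c (n+1) (fb V (n+1) (incL V (n+1) x))) := by
    simp only [DD, LinearMap.comp_apply, h2]
  rw [h1, h3, ← map_add]
  have h4 := LinearMap.ext_iff.mp (homotopy f c (n+1)) (incL V (n+1) x)
  simp only [LinearMap.add_apply, LinearMap.comp_apply, LinearMap.id_apply] at h4
  rw [h4]
  exact LinearMap.ext_iff.mp (nrm_incL (n+1)) x

lemma fb_incL_zero : (fb V 0).comp (incL V 0)
    = (LinearMap.toSpanSingleton ℤ (FC V 0)
        (single (fun i : Fin 0 => i.elim0) 1)).comp (augment V) := by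
  apply lhom_single_ext; intro s
  simp only [LinearMap.comp_apply, incL_single, fb_single, augment,
    Finsupp.linearCombination_single, smul_eq_mul, mul_one,
    LinearMap.toSpanSingleton_apply, one_smul]
  rw [show (Finset.univ : Finset (Fin (0+1))) = {0} from rfl, Finset.sum_singleton]
  simp only [Fin.val_zero, pow_zero, one_smul]
  congr 1
  funext i
  exact i.elim0

lemma claimB (hanti : ∀ a b : V, a ≤ b → b ≤ a → a = b)
    {f : V → V} {c : V} (hf : Monotone f) (hle : ∀ x, x ≤ f x) (hc : ∀ x, c ≤ f x)
    (x : Chains V 0) (hx : augment V x = 0) :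
    boundary V 0 (DD V f c 0 x) = x := by
  have hz : fb V 0 (incL V 0 x) = 0 := by
    have := LinearMap.ext_iff.mp fb_incL_zero x
    simp only [LinearMap.comp_apply, hx, map_zero] at this
    exact this
  have h4 := LinearMap.ext_iff.mp (homotopy f c 0) (incL V 0 x)
  simp only [LinearMap.add_apply, LinearMap.comp_apply, LinearMap.id_apply, hz, map_zero,
    add_zero] at h4
  have h1 : boundary V 0 (DD V f c 0 x)
      = nrm V 0 (fb V 1 (DL f c 1 (incL V 0 x))) :=
    LinearMap.ext_iff.mp (key_comm hanti hf hle hc 0) x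
  rw [h1, h4]
  exact LinearMap.ext_iff.mp (nrm_incL 0) x

theorem vanish (hanti : ∀ a b : V, a ≤ b → b ≤ a → a = b)
    (f : V → V) (c : V) (hf : Monotone f) (hle : ∀ x, x ≤ f x) (hc : ∀ x, c ≤ f x) :
    ∀ n : ℕ, Subsingleton (reducedHomology V n) := by
  have hpt : StrictMono (fun _ : Fin 1 => c) := by
    intro a b hab
    exfalso
    have h1 := a.2
    have h2 := b.2
    rw [Fin.lt_def] at hab
    omega
  intro n
  match n with
  | 0 =>
    show Subsingleton (ℤ ⧸ LinearMap.range (augment V))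
    rw [Submodule.Quotient.subsingleton_iff, LinearMap.range_eq_top]
    intro z
    refine ⟨single (α := Simplex V 0) ⟨fun _ => c, hpt⟩ z, ?_⟩
    simp [augment, Finsupp.linearCombination_single]
    erw [Finsupp.linearCombination_single]
    simp
  | 1 =>
    show Subsingleton (↥(LinearMap.ker (augment V)) ⧸
      Submodule.comap (LinearMap.ker (augment V)).subtype (LinearMap.range (boundary V 0)))
    rw [Submodule.Quotient.subsingleton_iff, Submodule.eq_top_iff']
    intro x
    rw [Submodule.mem_comap, Submodule.subtype_apply]
    exact ⟨DD V f c 0 x.1, claimB hanti hf hle hc x.1 (LinearMap.mem_ker.mp x.2)⟩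
  | (q+2) =>
    show Subsingleton (↥(LinearMap.ker (boundary V q)) ⧸
      Submodule.comap (LinearMap.ker (boundary V q)).subtype
        (LinearMap.range (boundary V (q+1))))
    rw [Submodule.Quotient.subsingleton_iff, Submodule.eq_top_iff']
    intro x
    rw [Submodule.mem_comap, Submodule.subtype_apply]
    refine ⟨DD V f c (q+1) x.1, ?_⟩
    have h := claimA hanti hf hle hc q x.1
    rw [LinearMap.mem_ker.mp x.2, map_zero, add_zero] at h
    exact h

end Order

section Grp

variable {G : Type} [AddCommGroup G]

/-- multiplication by `p` as an additive homomorphism. -/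
def pmul (p : ℕ) : G →+ G :=
  { toFun := fun g => p • g
    map_zero' := smul_zero p
    map_add' := fun a b => smul_add p a b }

/-- the subgroup `pG`. -/
def Psub (p : ℕ) : AddSubgroup G := (pmul (G := G) p).range

lemma exists_bound [Finite G] (p : ℕ) (hpgrp : ∀ g : G, ∃ n : ℕ, p ^ n • g = 0) :
    ∃ N : ℕ, ∀ g : G, p ^ N • g = 0 := by
  cases nonempty_fintype G
  choose nf hnf using hpgrp
  refine ⟨Finset.univ.sup nf, fun g => ?_⟩
  have hle : nf g ≤ Finset.univ.sup nf := Finset.le_sup (Finset.mem_univ g)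
  calc p ^ (Finset.univ.sup nf) • g
      = p ^ (Finset.univ.sup nf - nf g + nf g) • g := by rw [Nat.sub_add_cancel hle]
    _ = p ^ (Finset.univ.sup nf - nf g) • (p ^ (nf g) • g) := by rw [pow_add, mul_smul]
    _ = 0 := by rw [hnf g, smul_zero]

lemma sup_P_eq_top [Finite G] {p : ℕ} (hpgrp : ∀ g : G, ∃ n : ℕ, p ^ n • g = 0)
    {H : AddSubgroup G} (hH : H ⊔ Psub p = ⊤) : H = ⊤ := by
  obtain ⟨N, hN⟩ := exists_bound p hpgrp
  rw [AddSubgroup.eq_top_iff']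
  intro g
  have hson : ∀ i : ℕ, ∃ h ∈ H, ∃ k : G, g = h + p ^ i • k := by
    intro i
    induction i with
    | zero => exact ⟨0, zero_mem H, g, by simp⟩
    | succ i ih =>
      obtain ⟨h, hh, k, hk⟩ := ih
      have hk2 : k ∈ H ⊔ Psub p := by rw [hH]; exact AddSubgroup.mem_top k
      rw [AddSubgroup.mem_sup] at hk2
      obtain ⟨h', hh', z, hz, hsum⟩ := hk2
      obtain ⟨y, hy⟩ := hz
      refine ⟨h + p ^ i • h', add_mem hh (AddSubgroup.nsmul_mem H hh' _), y, ?_⟩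
      have hzy : z = p • y := hy.symm
      rw [hk, ← hsum, hzy, smul_add, add_assoc, smul_smul, ← pow_succ]
  obtain ⟨h, hh, k, hk⟩ := hson N
  rw [hk, hN k, add_zero]
  exact hh

lemma P_ne_bot {p : ℕ} (hpG : ∃ g : G, p • g ≠ 0) : Psub (G := G) p ≠ ⊥ := by
  intro hbot
  obtain ⟨g, hg⟩ := hpG
  apply hg
  have hmem : p • g ∈ Psub (G := G) p := ⟨g, rfl⟩
  rw [hbot] at hmem
  simpa using hmem

lemma P_ne_top [Finite G] {p : ℕ} (hpgrp : ∀ g : G, ∃ n : ℕ, p ^ n • g = 0)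
    (hG : Nontrivial G) : Psub (G := G) p ≠ ⊤ := by
  intro htop
  have hbt : (⊥ : AddSubgroup G) = ⊤ := sup_P_eq_top hpgrp (by rw [htop, sup_top_eq])
  obtain ⟨a, b, hab⟩ := hG
  apply hab
  have ha : a ∈ (⊥ : AddSubgroup G) := by rw [hbt]; exact AddSubgroup.mem_top a
  have hb : b ∈ (⊥ : AddSubgroup G) := by rw [hbt]; exact AddSubgroup.mem_top b
  rw [AddSubgroup.mem_bot] at ha hb
  rw [ha, hb]

end Grp

end StmtAux
open OrderComplex in
/-- for a nonzero finite abelian `p`-group `G` with `pG ≠ 0`, all reduced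
homology groups of the order complex of proper nontrivial subgroups of `G` vanish.
Here `reducedHomology V n` is the reduced homology `H̃_{n-1}` in degree `n - 1`, so `n`
ranges over all of `ℕ` exactly as the degree `q` ranges over all integers `≥ -1`. -/
theorem stmt_2 (p : ℕ) (hp : p.Prime) (G : Type) [AddCommGroup G] [Finite G]
    (hG : Nontrivial G) (hpgrp : ∀ g : G, ∃ n : ℕ, p ^ n • g = 0)
    (hpG : ∃ g : G, p • g ≠ 0) :
    ∀ n : ℕ,
      Subsingleton (reducedHomology {H : AddSubgroup G // H ≠ ⊥ ∧ H ≠ ⊤} n) := by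

  intro n
  have hPb : StmtAux.Psub (G := G) p ≠ ⊥ := StmtAux.P_ne_bot hpG
  have hPt : StmtAux.Psub (G := G) p ≠ ⊤ := StmtAux.P_ne_top hpgrp hG
  have hfne : ∀ H : {H : AddSubgroup G // H ≠ ⊥ ∧ H ≠ ⊤},
      (H.1 ⊔ StmtAux.Psub p ≠ ⊥ ∧ H.1 ⊔ StmtAux.Psub p ≠ ⊤) := by
    intro H
    constructor
    · intro hb
      apply hPb
      have hle : StmtAux.Psub (G := G) p ≤ H.1 ⊔ StmtAux.Psub p := le_sup_right
      rw [hb] at hle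
      exact le_bot_iff.mp hle
    · intro ht
      exact H.2.2 (StmtAux.sup_P_eq_top hpgrp ht)
  exact StmtAux.vanish (fun a b hab hba => Subtype.ext (le_antisymm hab hba))
    (fun H => ⟨H.1 ⊔ StmtAux.Psub p, hfne H⟩) ⟨StmtAux.Psub p, hPb, hPt⟩
    (fun a b hab => Subtype.coe_le_coe.mp (sup_le_sup_right (Subtype.coe_le_coe.mpr hab) _))
    (fun x => Subtype.coe_le_coe.mp le_sup_left)
    (fun x => Subtype.coe_le_coe.mp le_sup_right) n
end

section
/- Let R be an integral domain, let m, n ≥ 1 be natural numbers, and let a, b, c ∈ R. If F_m(a,b) = 0 and F_n(b,c) = 0, then F_{mn}(a,c) = 0. -/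
/-- `F m x y = ∏_{d·e = m} (x^d - y^e)`, the product over all ordered factorizations
`m = d·e` into positive integers, evaluated at elements `x y` of a commutative ring. -/
noncomputable def FPoly {R : Type*} [CommRing R] (m : ℕ) (x y : R) : R :=
  ∏ de ∈ Nat.divisorsAntidiagonal m, (x ^ de.1 - y ^ de.2)

theorem stmt_7 {R : Type*} [CommRing R] [IsDomain R] (m n : ℕ) (hm : 1 ≤ m) (hn : 1 ≤ n)
    (a b c : R) (h1 : FPoly m a b = 0) (h2 : FPoly n b c = 0) :
    FPoly (m * n) a c = 0 := by
  unfold FPoly at *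
  rw [Finset.prod_eq_zero_iff] at h1 h2
  obtain ⟨⟨d, e⟩, hde, h1⟩ := h1
  obtain ⟨⟨d', e'⟩, hde', h2⟩ := h2
  rw [Nat.mem_divisorsAntidiagonal] at hde hde'
  rw [sub_eq_zero] at h1 h2
  apply Finset.prod_eq_zero (i := (d * d', e * e'))
  · rw [Nat.mem_divisorsAntidiagonal]
    constructor
    · simp only at hde hde'
      rw [← hde.1, ← hde'.1]; ring
    · exact Nat.mul_ne_zero hde.2 hde'.2
  · simp only
    rw [sub_eq_zero, pow_mul, h1, ← pow_mul, mul_comm e d', pow_mul, h2, ← pow_mul,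
      mul_comm]
end

section
/- Let K be a field of characteristic 0, m ≥ 1, and let a ∈ K be an element which is neither 0 nor a root of unity (a ≠ 0 and a^k ≠ 1 for all k ≥ 1). Then the one-variable polynomial F_m(a, Y) ∈ K[Y] is squarefree; equivalently, the quotient ring K[Y]/(F_m(a,Y)) is reduced (and hence is isomorphic to a finite product of fields). -/
lemma separable_neg {K : Type*} [Field K] {p : Polynomial K} (hp : p.Separable) :
    (-p).Separable := by
  rw [Polynomial.Separable, Polynomial.derivative_neg]
  exact hp.neg_left.neg_right

theorem stmt_8 {K : Type*} [Field K] [CharZero K] (m : ℕ) (hm : 1 ≤ m)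
    (a : K) (ha : a ≠ 0) (ha' : ∀ k : ℕ, 1 ≤ k → a ^ k ≠ 1) :
    Squarefree (FPoly m (Polynomial.C a) (Polynomial.X) : Polynomial K) ∧
      IsReduced (Polynomial K ⧸
        Ideal.span {(FPoly m (Polynomial.C a) (Polynomial.X) : Polynomial K)}) := by
  have key : Squarefree (FPoly m (Polynomial.C a) (Polynomial.X) : Polynomial K) := by
    apply Polynomial.Separable.squarefree
    apply Polynomial.separable_prod'
    · -- pairwise coprime
      intro x hx y hy hxy
      rw [Nat.mem_divisorsAntidiagonal] at hx hy
      set L := AlgebraicClosure K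
      rw [Polynomial.isCoprime_iff_aeval_ne_zero_of_isAlgClosed K L]
      intro z
      by_contra hcon
      push_neg at hcon
      obtain ⟨h1, h2⟩ := hcon
      simp only [map_sub, map_pow, Polynomial.aeval_C, Polynomial.aeval_X, sub_eq_zero] at h1 h2
      set b : L := algebraMap K L a with hb
      have hbne : b ≠ 0 := by
        simpa [hb] using (map_ne_zero (algebraMap K L)).mpr ha
      have hb' : ∀ k : ℕ, 1 ≤ k → b ^ k ≠ 1 := by
        intro k hk hbk
        apply ha' k hk
        apply (algebraMap K L).injective
        simpa [hb] using hbk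
      -- z^{x.2} = b^{x.1}, z^{y.2} = b^{y.1}
      have h3 : b ^ (x.1 * y.2) = b ^ (y.1 * x.2) := by
        have e1 : b ^ (x.1 * y.2) = z ^ (x.2 * y.2) := by rw [pow_mul, h1, ← pow_mul]
        have e2 : b ^ (y.1 * x.2) = z ^ (y.2 * x.2) := by rw [pow_mul, h2, ← pow_mul]
        rw [e1, e2, mul_comm]
      have hx1 : 0 < x.1 := by have h := hx.1; rcases Nat.eq_zero_or_pos x.1 with h0|h0; · simp [h0] at h; omega
                               · exact h0
      have hx2 : 0 < x.2 := by have h := hx.1; rcases Nat.eq_zero_or_pos x.2 with h0|h0; · simp [h0] at h; omega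
                               · exact h0
      have hy1 : 0 < y.1 := by have h := hy.1; rcases Nat.eq_zero_or_pos y.1 with h0|h0; · simp [h0] at h; omega
                               · exact h0
      have hy2 : 0 < y.2 := by have h := hy.1; rcases Nat.eq_zero_or_pos y.2 with h0|h0; · simp [h0] at h; omega
                               · exact h0
      have heq : x.1 * y.2 = y.1 * x.2 := by
        by_contra hne
        rcases Nat.lt_or_ge (x.1 * y.2) (y.1 * x.2) with hlt | hge
        · have : b ^ (y.1 * x.2 - x.1 * y.2) = 1 := by
            have := h3.symm
            rwa [← Nat.sub_add_cancel hlt.le, pow_add, mul_eq_right₀ (pow_ne_zero _ hbne)] at this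
          exact hb' _ (Nat.le_sub_of_add_le (by omega)) this
        · have hlt : x.1 * y.2 > y.1 * x.2 := lt_of_le_of_ne hge (Ne.symm hne)
          have : b ^ (x.1 * y.2 - y.1 * x.2) = 1 := by
            rwa [← Nat.sub_add_cancel hlt.le, pow_add, mul_eq_right₀ (pow_ne_zero _ hbne)] at h3
          exact hb' _ (Nat.le_sub_of_add_le (by omega)) this
      -- x.1 * x.2 = m = y.1 * y.2 and x.1 * y.2 = y.1 * x.2 imply x = y
      apply hxy
      have hxm := hx.1
      have hym := hy.1
      have hsq : x.1 * x.1 * (x.2 * y.2) = y.1 * y.1 * (x.2 * y.2) := by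
        calc x.1 * x.1 * (x.2 * y.2) = (x.1 * x.2) * (x.1 * y.2) := by ring
        _ = (y.1 * y.2) * (y.1 * x.2) := by rw [hxm, hym, heq]
        _ = y.1 * y.1 * (x.2 * y.2) := by ring
      have h11 : x.1 = y.1 := by
        have := Nat.eq_of_mul_eq_mul_right (Nat.mul_pos hx2 hy2) hsq
        exact Nat.mul_self_inj.mp this
      have h22 : x.2 = y.2 := by
        rw [h11] at hxm
        rw [← hym] at hxm
        exact Nat.eq_of_mul_eq_mul_left hy1 hxm
      exact Prod.ext h11 h22
    · -- each factor separable
      intro x hx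
      rw [Nat.mem_divisorsAntidiagonal] at hx
      have hx2 : 0 < x.2 := by
        rcases Nat.eq_zero_or_pos x.2 with h | h
        · exfalso; rw [h, mul_zero] at hx; omega
        · exact h
      have : (Polynomial.C a ^ x.1 - Polynomial.X ^ x.2 : Polynomial K)
          = -(Polynomial.X ^ x.2 - Polynomial.C (a ^ x.1)) := by
        rw [map_pow]; ring
      rw [this]
      exact separable_neg (Polynomial.separable_X_pow_sub_C (a ^ x.1)
        (by exact_mod_cast Nat.cast_ne_zero.mpr hx2.ne') (pow_ne_zero _ ha))
  refine ⟨key, ?_⟩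
  rw [← Ideal.isRadical_iff_quotient_reduced, ← isRadical_iff_span_singleton]
  exact key.isRadical
end

section
/- For all m, n ≥ 1, the polynomial F_{mn}(x,z) lies in the ideal of ℤ[x,y,z] generated by F_m(x,y) and F_n(y,z). -/
open Polynomial

set_option maxSynthPendingDepth 5

namespace Stmt10Aux

/-- A fixed transcendental complex number. -/
noncomputable def tc : ℂ := ((liouvilleNumber 3 : ℝ) : ℂ)

lemma tc_transcendental : Transcendental ℤ tc := by
  intro h
  apply transcendental_liouvilleNumber (m := 3) (by norm_num)
  obtain ⟨p, hp0, hp⟩ := h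
  refine ⟨p, hp0, ?_⟩
  have key : Complex.ofRealHom ((Polynomial.aeval (liouvilleNumber 3)) p) = Polynomial.aeval tc p := by
    rw [Polynomial.aeval_def, Polynomial.aeval_def, algebraMap_int_eq, algebraMap_int_eq,
      Polynomial.hom_eval₂,
      RingHom.ext_int (Complex.ofRealHom.comp (Int.castRingHom ℝ)) (Int.castRingHom ℂ)]
    rfl
  rw [hp] at key
  exact Complex.ofReal_injective (by simpa using key)

lemma tc_pow_inj {a b : ℕ} (h : tc ^ a = tc ^ b) : a = b := by
  by_contra hne
  apply tc_transcendental
  refine ⟨X ^ a - X ^ b, ?_, by simp [h]⟩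
  intro h0
  have h1 : (X ^ a - X ^ b : Polynomial ℤ).coeff a = 0 := by rw [h0]; simp
  rw [Polynomial.coeff_sub, Polynomial.coeff_X_pow, Polynomial.coeff_X_pow] at h1
  simp [hne, Ne.symm hne] at h1

lemma tc_ne_zero : tc ≠ 0 := by
  intro h
  apply tc_transcendental
  exact ⟨X, X_ne_zero, by simp [h]⟩

/-- `α` is multiplicatively free: nonzero and of infinite order. -/
def MFree (α : ℂ) : Prop := α ≠ 0 ∧ ∀ N : ℕ, α ^ N = 1 → N = 0

lemma mfree_tc : MFree tc := by
  refine ⟨tc_ne_zero, fun N hN => ?_⟩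
  have : tc ^ N = tc ^ 0 := by simpa using hN
  simpa using tc_pow_inj this

lemma MFree.root {α β : ℂ} (hα : MFree α) {d e : ℕ} (hd : d ≠ 0) (he : e ≠ 0)
    (h : β ^ e = α ^ d) : MFree β := by
  constructor
  · intro hb
    exact (pow_ne_zero d hα.1) (by rw [← h, hb, zero_pow he])
  · intro N hN
    have : α ^ (d * N) = 1 := by
      rw [pow_mul, ← h, ← pow_mul, mul_comm e N, pow_mul, hN, one_pow]
    rcases Nat.mul_eq_zero.mp (hα.2 _ this) with h | h
    · exact absurd h hd
    · exact h

lemma MFree.pow_inj {α : ℂ} (hα : MFree α) {a b : ℕ} (h : α ^ a = α ^ b) : a = b := by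
  have key : ∀ a b : ℕ, a ≤ b → α ^ a = α ^ b → a = b := by
    intro a b hab h
    have h1 : α ^ a * α ^ (b - a) = α ^ a * 1 := by
      rw [mul_one, ← pow_add, Nat.add_sub_cancel' hab, h]
    have h2 := mul_left_cancel₀ (pow_ne_zero a hα.1) h1
    have h3 := hα.2 _ h2
    omega
  rcases le_total a b with hab | hab
  · exact key a b hab h
  · exact (key b a hab h.symm).symm

/-- The finset of `e`-th roots of `c` in `ℂ`. -/
noncomputable def rootFin (e : ℕ) (c : ℂ) : Finset ℂ := (X ^ e - C c).roots.toFinset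

lemma mem_rootFin {e : ℕ} {c η : ℂ} (he : e ≠ 0) : η ∈ rootFin e c ↔ η ^ e = c := by
  rw [rootFin, Multiset.mem_toFinset, Polynomial.mem_roots
    (Polynomial.monic_X_pow_sub_C c he).ne_zero]
  simp [Polynomial.IsRoot, sub_eq_zero]

lemma card_rootFin {e : ℕ} {c : ℂ} (he : e ≠ 0) (hc : c ≠ 0) : (rootFin e c).card = e := by
  have hsep : (X ^ e - C c).Separable :=
    Polynomial.separable_X_pow_sub_C c (by exact_mod_cast (Nat.cast_ne_zero (R := ℂ)).2 he) hc
  rw [rootFin, Multiset.toFinset_card_of_nodup (Polynomial.nodup_roots hsep)]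
  rw [Polynomial.splits_iff_card_roots.mp (IsAlgClosed.splits _),
    Polynomial.natDegree_X_pow_sub_C]

/-! Next: grid sets and counting -/

lemma da_parts {m : ℕ} {de : ℕ × ℕ} (h : de ∈ Nat.divisorsAntidiagonal m) :
    de.1 ≠ 0 ∧ de.2 ≠ 0 ∧ de.1 * de.2 = m ∧ m ≠ 0 := by
  obtain ⟨h1, h2⟩ := Nat.mem_divisorsAntidiagonal.mp h
  refine ⟨?_, ?_, h1, h2⟩ <;> (intro h0; rw [h0] at h1; simp at h1; omega)

lemma da_unique {m : ℕ} {d e d' e' : ℕ} (h1 : d * e = m) (h2 : d' * e' = m)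
    (he : e ≠ 0) (he' : e' ≠ 0) (hd' : d' ≠ 0) (h : d * e' = d' * e) : d = d' ∧ e = e' := by
  have key : d ^ 2 * (e * e') = d' ^ 2 * (e * e') := by
    calc d ^ 2 * (e * e') = (d * e) * (d * e') := by ring
    _ = m * (d' * e) := by rw [h1, h]
    _ = (d' * e') * (d' * e) := by rw [h2]
    _ = d' ^ 2 * (e * e') := by ring
  have hee' : 0 < e * e' := Nat.pos_of_ne_zero (Nat.mul_ne_zero he he')
  have hsq : d ^ 2 = d' ^ 2 := Nat.eq_of_mul_eq_mul_right hee' key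
  have hd : d = d' := Nat.pow_left_injective (by norm_num) hsq
  subst hd
  refine ⟨rfl, ?_⟩
  have : d * e = d * e' := by rw [h1, h2]
  exact Nat.eq_of_mul_eq_mul_left (Nat.pos_of_ne_zero hd') this

noncomputable def Hset (m : ℕ) : Finset ℂ :=
  (Nat.divisorsAntidiagonal m).biUnion fun de => rootFin de.2 (tc ^ de.1)

noncomputable def Zset (n : ℕ) (η : ℂ) : Finset ℂ :=
  (Nat.divisorsAntidiagonal n).biUnion fun fg => rootFin fg.2 (η ^ fg.1)

lemma biUnion_disjoint {s : Finset (ℕ × ℕ)} {m : ℕ} {α : ℂ} (hα : MFree α)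
    (hs : s = Nat.divisorsAntidiagonal m) :
    ∀ de ∈ s, ∀ de' ∈ s, de ≠ de' →
      Disjoint (rootFin de.2 (α ^ de.1)) (rootFin de'.2 (α ^ de'.1)) := by
  subst hs
  intro de hde de' hde' hne
  obtain ⟨hd1, hd2, hdm, hm⟩ := da_parts hde
  obtain ⟨hd1', hd2', hdm', _⟩ := da_parts hde'
  rw [Finset.disjoint_left]
  intro η hη hη'
  rw [mem_rootFin hd2] at hη
  rw [mem_rootFin hd2'] at hη'
  have hcross : α ^ (de.1 * de'.2) = α ^ (de'.1 * de.2) := by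
    calc α ^ (de.1 * de'.2) = (α ^ de.1) ^ de'.2 := by rw [pow_mul]
    _ = (η ^ de.2) ^ de'.2 := by rw [hη]
    _ = (η ^ de'.2) ^ de.2 := by rw [← pow_mul, ← pow_mul, mul_comm]
    _ = (α ^ de'.1) ^ de.2 := by rw [hη']
    _ = α ^ (de'.1 * de.2) := by rw [pow_mul]
  have := hα.pow_inj hcross
  obtain ⟨h1, h2⟩ := da_unique hdm hdm' hd2 hd2' hd1' this
  exact hne (Prod.ext h1 h2)

lemma card_Hset {m : ℕ} :
    (Hset m).card = ∑ de ∈ Nat.divisorsAntidiagonal m, de.2 := by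
  rw [Hset, Finset.card_biUnion (biUnion_disjoint mfree_tc rfl)]
  refine Finset.sum_congr rfl fun de hde => ?_
  obtain ⟨hd1, hd2, _, _⟩ := da_parts hde
  exact card_rootFin hd2 (pow_ne_zero _ tc_ne_zero)

lemma card_Zset {n : ℕ} {η : ℂ} (hη : MFree η) :
    (Zset n η).card = ∑ fg ∈ Nat.divisorsAntidiagonal n, fg.2 := by
  rw [Zset, Finset.card_biUnion (biUnion_disjoint hη rfl)]
  refine Finset.sum_congr rfl fun fg hfg => ?_
  obtain ⟨hf1, hf2, _, _⟩ := da_parts hfg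
  exact card_rootFin hf2 (pow_ne_zero _ hη.1)

lemma mem_Hset {m : ℕ} {η : ℂ} (h : η ∈ Hset m) :
    ∃ de ∈ Nat.divisorsAntidiagonal m, η ^ de.2 = tc ^ de.1 := by
  obtain ⟨de, hde, hr⟩ := Finset.mem_biUnion.mp h
  exact ⟨de, hde, (mem_rootFin (da_parts hde).2.1).mp hr⟩

lemma mem_Zset {n : ℕ} {η ζ : ℂ} (h : ζ ∈ Zset n η) :
    ∃ fg ∈ Nat.divisorsAntidiagonal n, ζ ^ fg.2 = η ^ fg.1 := by
  obtain ⟨fg, hfg, hr⟩ := Finset.mem_biUnion.mp h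
  exact ⟨fg, hfg, (mem_rootFin (da_parts hfg).2.1).mp hr⟩

lemma mfree_of_mem_Hset {m : ℕ} {η : ℂ} (h : η ∈ Hset m) : MFree η := by
  obtain ⟨de, hde, hη⟩ := mem_Hset h
  obtain ⟨hd1, hd2, _, _⟩ := da_parts hde
  exact mfree_tc.root hd1 hd2 hη

/-! ## The three polynomials in `ℤ[x][y][z]` -/

noncomputable def FmA (m : ℕ) : Polynomial (Polynomial ℤ) :=
  ∏ de ∈ Nat.divisorsAntidiagonal m, (X ^ de.2 - C (X ^ de.1))

noncomputable def FnT (n : ℕ) : Polynomial (Polynomial (Polynomial ℤ)) :=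
  ∏ fg ∈ Nat.divisorsAntidiagonal n,
    (X ^ fg.2 - C ((X : Polynomial (Polynomial ℤ)) ^ fg.1))

noncomputable def GT (m n : ℕ) : Polynomial (Polynomial (Polynomial ℤ)) :=
  ∏ ab ∈ Nat.divisorsAntidiagonal (m * n),
    (C (C (X : Polynomial ℤ)) ^ ab.1 - X ^ ab.2)

lemma monic_FmA (m : ℕ) : (FmA m).Monic :=
  monic_prod_of_monic _ _ fun de hde => monic_X_pow_sub_C _ (da_parts hde).2.1

lemma monic_FnT (n : ℕ) : (FnT n).Monic :=
  monic_prod_of_monic _ _ fun fg hfg => monic_X_pow_sub_C _ (da_parts hfg).2.1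

lemma natDegree_FmA (m : ℕ) :
    (FmA m).natDegree = ∑ de ∈ Nat.divisorsAntidiagonal m, de.2 := by
  rw [FmA, natDegree_prod_of_monic _ _ fun de hde => monic_X_pow_sub_C _ (da_parts hde).2.1]
  exact Finset.sum_congr rfl fun de _ => natDegree_X_pow_sub_C

lemma natDegree_FnT (n : ℕ) :
    (FnT n).natDegree = ∑ fg ∈ Nat.divisorsAntidiagonal n, fg.2 := by
  rw [FnT, natDegree_prod_of_monic _ _ fun fg hfg => monic_X_pow_sub_C _ (da_parts hfg).2.1]
  exact Finset.sum_congr rfl fun fg _ => natDegree_X_pow_sub_C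

lemma one_le_sigma {m : ℕ} (hm : m ≠ 0) : 1 ≤ ∑ de ∈ Nat.divisorsAntidiagonal m, de.2 := by
  have hmem : ((m, 1) : ℕ × ℕ) ∈ Nat.divisorsAntidiagonal m :=
    Nat.mem_divisorsAntidiagonal.mpr ⟨mul_one m, hm⟩
  calc 1 = ((m, 1) : ℕ × ℕ).2 := rfl
  _ ≤ ∑ de ∈ Nat.divisorsAntidiagonal m, de.2 :=
      Finset.single_le_sum (fun i _ => Nat.zero_le _) hmem

/-! ## Evaluation at the transcendental -/

noncomputable def evt : Polynomial ℤ →+* ℂ := eval₂RingHom (Int.castRingHom ℂ) tc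

lemma evt_injective : Function.Injective evt := by
  intro a b h
  by_contra hne
  apply tc_transcendental
  refine ⟨a - b, sub_ne_zero.mpr hne, ?_⟩
  rw [aeval_def, algebraMap_int_eq]
  have : evt (a - b) = 0 := by rw [map_sub, h, sub_self]
  simpa [evt, coe_eval₂RingHom] using this

/-! ## The main division argument -/

theorem main_aux (m n : ℕ) (hm : m ≠ 0) (hn : n ≠ 0) :
    ∃ u v, GT m n = FnT n * u + C (FmA m) * v := by
  classical
  set Fm := FmA m with hFm
  set Fn := FnT n with hFnd
  have hFmM : Fm.Monic := monic_FmA m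
  have hFnM : Fn.Monic := monic_FnT n
  set M := Fm.natDegree with hMd
  set N := Fn.natDegree with hNd
  have hM1 : 1 ≤ M := by rw [hMd, hFm, natDegree_FmA]; exact one_le_sigma hm
  have hN1 : 1 ≤ N := by rw [hNd, hFnd, natDegree_FnT]; exact one_le_sigma hn
  set G := GT m n with hGd
  set Q1 := G /ₘ Fn with hQ1
  set R1 := G %ₘ Fn with hR1
  have hdiv1 : R1 + Fn * Q1 = G := modByMonic_add_div G Fn
  set Q2 := R1.sum (fun k c => C (c /ₘ Fm) * X ^ k) with hQ2
  set R2 := R1.sum (fun k c => C (c %ₘ Fm) * X ^ k) with hR2def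
  have hdiv2 : C Fm * Q2 + R2 = R1 := by
    rw [hQ2, hR2def, Polynomial.sum_def, Polynomial.sum_def, Finset.mul_sum,
      ← Finset.sum_add_distrib]
    conv_rhs => rw [← Polynomial.sum_C_mul_X_pow_eq R1, Polynomial.sum_def]
    refine Finset.sum_congr rfl fun k hk => ?_
    rw [← mul_assoc, ← C_mul, ← add_mul, ← C_add]
    congr 2
    rw [add_comm]
    exact modByMonic_add_div _ Fm
  have hcoeffR2 : ∀ k, R2.coeff k = (R1.coeff k) %ₘ Fm := by
    intro k
    rw [hR2def, Polynomial.sum_def, Polynomial.finset_sum_coeff]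
    simp only [Polynomial.coeff_C_mul, Polynomial.coeff_X_pow, mul_ite, mul_one, mul_zero]
    rw [Finset.sum_ite_eq R1.support k (fun j => R1.coeff j %ₘ Fm)]
    by_cases hk : k ∈ R1.support
    · simp [hk]
    · simp [hk, Polynomial.notMem_support_iff.mp hk, Polynomial.zero_modByMonic]
  have hdegR1 : R1.degree < Fn.degree := degree_modByMonic_lt G hFnM
  have hR2degle : R2.degree ≤ R1.degree := by
    rw [Polynomial.degree_le_iff_coeff_zero]
    intro k hk
    rw [hcoeffR2, Polynomial.coeff_eq_zero_of_degree_lt hk, Polynomial.zero_modByMonic]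
  have hR2N : R2.natDegree < N := by
    by_cases h0 : R2 = 0
    · rw [h0, natDegree_zero]; omega
    · have := Polynomial.natDegree_lt_natDegree h0 (lt_of_le_of_lt hR2degle hdegR1)
      exact this
  have hR2M : ∀ k, (R2.coeff k).natDegree < M := by
    intro k
    rw [hcoeffR2]
    by_cases h0 : (R1.coeff k) %ₘ Fm = 0
    · rw [h0, natDegree_zero]; omega
    · exact Polynomial.natDegree_lt_natDegree h0 (degree_modByMonic_lt _ hFmM)
  -- evaluation
  set P : Polynomial (Polynomial ℂ) := R2.map (mapRingHom evt) with hP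
  have hR2eq : R2 = G - Fn * Q1 - C Fm * Q2 := by
    rw [← hdiv1, ← hdiv2]; ring
  have hvan : ∀ η ∈ Hset m, ∀ ζ ∈ Zset n η,
      Polynomial.eval ζ (P.map (evalRingHom η)) = 0 := by
    intro η hη ζ hζ
    obtain ⟨de, hde, hηe⟩ := mem_Hset hη
    obtain ⟨hd1, hd2, hdem, _⟩ := da_parts hde
    obtain ⟨fg, hfg, hζg⟩ := mem_Zset hζ
    obtain ⟨hf1, hf2, hfgn, _⟩ := da_parts hfg
    set φ : Polynomial (Polynomial (Polynomial ℤ)) →+* ℂ :=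
      eval₂RingHom ((evalRingHom η).comp (mapRingHom evt)) ζ with hφ
    have hrw : Polynomial.eval ζ (P.map (evalRingHom η)) = φ R2 := by
      rw [hP, Polynomial.map_map, hφ, coe_eval₂RingHom, Polynomial.eval_map]
    rw [hrw, hR2eq]
    rw [map_sub φ, map_sub φ, map_mul φ, map_mul φ]
    have hφx : φ (C (C (X : Polynomial ℤ))) = tc := by
      simp [hφ, evt, coe_eval₂RingHom]
    have hφy : φ (C (X : Polynomial (Polynomial ℤ))) = η := by
      simp [hφ, coe_eval₂RingHom]
    have hφz : φ (X : Polynomial (Polynomial (Polynomial ℤ))) = ζ := by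
      simp [hφ, coe_eval₂RingHom]
    have hG0 : φ G = 0 := by
      rw [hGd, GT, map_prod φ]
      refine Finset.prod_eq_zero (i := (de.1 * fg.1, de.2 * fg.2)) ?_ ?_
      · exact Nat.mem_divisorsAntidiagonal.mpr
          ⟨by rw [mul_mul_mul_comm, hdem, hfgn], Nat.mul_ne_zero hm hn⟩
      · rw [map_sub φ, map_pow φ, map_pow φ, hφx, hφz]
        have : ζ ^ (de.2 * fg.2) = tc ^ (de.1 * fg.1) := by
          calc ζ ^ (de.2 * fg.2) = (ζ ^ fg.2) ^ de.2 := by rw [← pow_mul, mul_comm]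
          _ = (η ^ fg.1) ^ de.2 := by rw [hζg]
          _ = (η ^ de.2) ^ fg.1 := by rw [← pow_mul, ← pow_mul, mul_comm]
          _ = (tc ^ de.1) ^ fg.1 := by rw [hηe]
          _ = tc ^ (de.1 * fg.1) := by rw [pow_mul]
        rw [this, sub_self]
    have hFn0 : φ Fn = 0 := by
      rw [hFnd, FnT, map_prod φ]
      refine Finset.prod_eq_zero hfg ?_
      have hyf : φ (C ((X : Polynomial (Polynomial ℤ)) ^ fg.1)) = η ^ fg.1 := by
        simp [hφ, evt, coe_eval₂RingHom, Polynomial.eval₂_pow, Polynomial.coe_mapRingHom,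
          Polynomial.eval₂_C, Polynomial.eval₂_X, Polynomial.map_X, Polynomial.eval_X,
          Polynomial.map_C, Polynomial.eval_C, Polynomial.map_pow, Polynomial.eval_pow]
      rw [map_sub φ, map_pow φ, hφz, hyf, hζg, sub_self]
    have hFm0 : φ (C Fm) = 0 := by
      have hcomp : φ (C Fm) = (φ.comp C) Fm := rfl
      rw [hcomp, hFm, FmA, map_prod (φ.comp C)]
      refine Finset.prod_eq_zero hde ?_
      have hfactor : (φ.comp C) (X ^ de.2 - C ((X : Polynomial ℤ) ^ de.1))
          = η ^ de.2 - tc ^ de.1 := by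
        simp [hφ, evt, coe_eval₂RingHom, Polynomial.eval₂_pow, Polynomial.coe_mapRingHom,
          Polynomial.eval₂_C, Polynomial.eval₂_X, Polynomial.map_X, Polynomial.eval_X,
          Polynomial.map_C, Polynomial.eval_C, Polynomial.map_pow, Polynomial.eval_pow]
      rw [hfactor, hηe, sub_self]
    rw [hG0, hFn0, hFm0, zero_mul, zero_mul, sub_zero, sub_zero]
  have hNsum : N = ∑ fg ∈ Nat.divisorsAntidiagonal n, fg.2 := by rw [hNd, hFnd, natDegree_FnT]
  have hMsum : M = ∑ de ∈ Nat.divisorsAntidiagonal m, de.2 := by rw [hMd, hFm, natDegree_FmA]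
  have hPmapzero : ∀ η ∈ Hset m, P.map (evalRingHom η) = 0 := by
    intro η hη
    refine Polynomial.eq_zero_of_natDegree_lt_card_of_eval_eq_zero' _ (Zset n η)
      (hvan η hη) ?_
    rw [card_Zset (mfree_of_mem_Hset hη), ← hNsum]
    calc (P.map (evalRingHom η)).natDegree ≤ P.natDegree := natDegree_map_le
    _ ≤ R2.natDegree := natDegree_map_le
    _ < N := hR2N
  have hPzero : P = 0 := by
    apply Polynomial.ext
    intro k
    rw [Polynomial.coeff_zero]
    refine Polynomial.eq_zero_of_natDegree_lt_card_of_eval_eq_zero' _ (Hset m) ?_ ?_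
    · intro η hη
      have hc : Polynomial.eval η (P.coeff k) = (P.map (evalRingHom η)).coeff k := by
        rw [Polynomial.coeff_map (f := evalRingHom η)]
        rfl
      rw [hc, hPmapzero η hη, Polynomial.coeff_zero]
    · rw [card_Hset, ← hMsum]
      have hck : P.coeff k = (R2.coeff k).map evt := by
        rw [hP, Polynomial.coeff_map, coe_mapRingHom]
      calc (P.coeff k).natDegree = ((R2.coeff k).map evt).natDegree := by rw [hck]
      _ ≤ (R2.coeff k).natDegree := natDegree_map_le
      _ < M := hR2M k
  have hR2zero : R2 = 0 := by
    apply Polynomial.ext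
    intro k
    rw [Polynomial.coeff_zero]
    apply Polynomial.map_injective evt evt_injective
    rw [Polynomial.map_zero]
    have hck : (R2.coeff k).map evt = P.coeff k := by
      rw [hP, Polynomial.coeff_map, coe_mapRingHom]
    rw [hck, hPzero, Polynomial.coeff_zero]
  refine ⟨Q1, Q2, ?_⟩
  rw [← hdiv1, ← hdiv2, hR2zero]
  ring

end Stmt10Aux

open MvPolynomial in
theorem stmt_10 (m n : ℕ) (hm : 1 ≤ m) (hn : 1 ≤ n) :
    FPoly (m * n) (X 0) (X 2) ∈
      Ideal.span ({FPoly m (X 0) (X 1), FPoly n (X 1) (X 2)} :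
        Set (MvPolynomial (Fin 3) ℤ)) := by
  obtain ⟨u, v, huv⟩ := Stmt10Aux.main_aux m n (by omega) (by omega)
  set ψ1 : Polynomial ℤ →+* MvPolynomial (Fin 3) ℤ :=
    Polynomial.eval₂RingHom (Int.castRingHom _) (X 0) with hψ1
  set ψ2 : Polynomial (Polynomial ℤ) →+* MvPolynomial (Fin 3) ℤ :=
    Polynomial.eval₂RingHom ψ1 (X 1) with hψ2
  set ψ3 : Polynomial (Polynomial (Polynomial ℤ)) →+* MvPolynomial (Fin 3) ℤ :=
    Polynomial.eval₂RingHom ψ2 (X 2) with hψ3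
  have e1 : ∀ k : ℕ,
      ψ3 ((Polynomial.C (Polynomial.C (Polynomial.X : Polynomial ℤ))) ^ k) = (X 0) ^ k := by
    intro k
    simp [hψ3, hψ2, hψ1, Polynomial.coe_eval₂RingHom, Polynomial.eval₂_pow]
  have e2 : ∀ k : ℕ,
      ψ3 (Polynomial.C ((Polynomial.X : Polynomial (Polynomial ℤ)) ^ k)) = (X 1) ^ k := by
    intro k
    simp [hψ3, hψ2, hψ1, Polynomial.coe_eval₂RingHom, Polynomial.eval₂_pow]
  have e3 : ∀ k : ℕ,
      ψ3 ((Polynomial.X : Polynomial (Polynomial (Polynomial ℤ))) ^ k) = (X 2) ^ k := by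
    intro k
    simp [hψ3, hψ2, hψ1, Polynomial.coe_eval₂RingHom, Polynomial.eval₂_pow]
  have hG : ψ3 (Stmt10Aux.GT m n) = FPoly (m * n) (X 0) (X 2) := by
    rw [Stmt10Aux.GT, map_prod ψ3, FPoly]
    refine Finset.prod_congr rfl fun ab _ => ?_
    rw [map_sub ψ3, e1, e3]
  have hFn : ψ3 (Stmt10Aux.FnT n)
      = (-1 : MvPolynomial (Fin 3) ℤ) ^ (Nat.divisorsAntidiagonal n).card
        * FPoly n (X 1) (X 2) := by
    rw [Stmt10Aux.FnT, map_prod ψ3, FPoly, ← Finset.prod_const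
      (-1 : MvPolynomial (Fin 3) ℤ), ← Finset.prod_mul_distrib]
    refine Finset.prod_congr rfl fun fg _ => ?_
    rw [map_sub ψ3, e2, e3]
    ring
  have hFm : ψ3 (Polynomial.C (Stmt10Aux.FmA m))
      = (-1 : MvPolynomial (Fin 3) ℤ) ^ (Nat.divisorsAntidiagonal m).card
        * FPoly m (X 0) (X 1) := by
    have hcomp : ψ3 (Polynomial.C (Stmt10Aux.FmA m))
        = (ψ3.comp Polynomial.C) (Stmt10Aux.FmA m) := rfl
    rw [hcomp, Stmt10Aux.FmA, map_prod (ψ3.comp Polynomial.C), FPoly, ← Finset.prod_const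
      (-1 : MvPolynomial (Fin 3) ℤ), ← Finset.prod_mul_distrib]
    refine Finset.prod_congr rfl fun de _ => ?_
    rw [map_sub (ψ3.comp Polynomial.C)]
    have c1 : (ψ3.comp Polynomial.C) ((Polynomial.X : Polynomial (Polynomial ℤ)) ^ de.2)
        = (X 1) ^ de.2 := e2 de.2
    have c2 : (ψ3.comp Polynomial.C) (Polynomial.C ((Polynomial.X : Polynomial ℤ) ^ de.1))
        = (X 0) ^ de.1 := by
      simp [hψ3, hψ2, hψ1, Polynomial.coe_eval₂RingHom, Polynomial.eval₂_pow]
    rw [c1, c2]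
    ring
  rw [Ideal.mem_span_pair]
  refine ⟨(-1 : MvPolynomial (Fin 3) ℤ) ^ (Nat.divisorsAntidiagonal m).card * ψ3 v,
    (-1 : MvPolynomial (Fin 3) ℤ) ^ (Nat.divisorsAntidiagonal n).card * ψ3 u, ?_⟩
  have h3 := congrArg ψ3 huv
  rw [map_add ψ3, map_mul ψ3, map_mul ψ3, hG, hFn, hFm] at h3
  rw [h3]
  ring
end

section
/- For all m, n ≥ 1, the quotient ring ℤ[x,y,z]/(F_m(x,y), F_n(y,z)) is reduced (has no nonzero nilpotent elements). -/
noncomputable section StmtAux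

open Polynomial

universe u

-- `FF a N = ∏_{d·e = N} (X^d - C (a^e))`.
noncomputable def FF {R : Type*} [CommRing R] (a : R) (N : ℕ) : R[X] :=
  ∏ de ∈ Nat.divisorsAntidiagonal N, (Polynomial.X ^ de.1 - Polynomial.C (a ^ de.2))

lemma FF_monic {R : Type*} [CommRing R] (a : R) (N : ℕ) : (FF a N).Monic := by
  refine Polynomial.monic_prod_of_monic _ _ fun p hp => ?_
  refine Polynomial.monic_X_pow_sub_C _ ?_
  rcases Nat.mem_divisorsAntidiagonal.mp hp with ⟨h1, h2⟩
  intro h0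
  exact h2 (by rw [← h1, h0, zero_mul])

lemma FF_map {R S : Type*} [CommRing R] [CommRing S] (φ : R →+* S) (a : R) (N : ℕ) :
    (FF a N).map φ = FF (φ a) N := by
  simp only [FF, Polynomial.map_prod, Polynomial.map_sub, Polynomial.map_pow,
    Polynomial.map_X, Polynomial.map_C, map_pow]

lemma FF_eval₂ {R S : Type*} [CommRing R] [CommRing S] (φ : R →+* S) (x : S) (a : R) (N : ℕ) :
    (FF a N).eval₂ φ x = ∏ de ∈ Nat.divisorsAntidiagonal N, (x ^ de.1 - (φ a) ^ de.2) := by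
  rw [FF, Polynomial.eval₂_finset_prod]
  refine Finset.prod_congr rfl fun de _ => ?_
  simp [Polynomial.eval₂_sub, Polynomial.eval₂_pow, map_pow]


lemma pow_eq_pow_exponent_eq {M : Type*} [MonoidWithZero M] [IsCancelMulZero M] {t : M} (ht0 : t ≠ 0)
    (ht1 : ∀ k : ℕ, k ≠ 0 → t ^ k ≠ 1) {a b : ℕ} (h : t ^ a = t ^ b) : a = b := by
  rcases Nat.lt_trichotomy a b with hab | hab | hab
  · exfalso
    have h2 : t ^ a * t ^ (b - a) = t ^ a * 1 := by
      rw [mul_one, ← pow_add, Nat.add_sub_cancel' hab.le]; exact h.symm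
    exact ht1 (b - a) (Nat.sub_ne_zero_of_lt hab) (mul_left_cancel₀ (pow_ne_zero a ht0) h2)
  · exact hab
  · exfalso
    have h2 : t ^ b * t ^ (a - b) = t ^ b * 1 := by
      rw [mul_one, ← pow_add, Nat.add_sub_cancel' hab.le]; exact h
    exact ht1 (a - b) (Nat.sub_ne_zero_of_lt hab) (mul_left_cancel₀ (pow_ne_zero b ht0) h2)

variable {L : Type*} [Field L] [CharZero L]

lemma FF_coprime {t : L} (ht0 : t ≠ 0)
    (ht1 : ∀ k : ℕ, k ≠ 0 → t ^ k ≠ 1) {N : ℕ} {p q : ℕ × ℕ}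
    (hp : p ∈ N.divisorsAntidiagonal) (hq : q ∈ N.divisorsAntidiagonal) (hne : p ≠ q) :
    IsCoprime ((Polynomial.X : L[X]) ^ p.1 - Polynomial.C (t ^ p.2))
      (Polynomial.X ^ q.1 - Polynomial.C (t ^ q.2)) := by
  classical
  obtain ⟨hp1, hN⟩ := Nat.mem_divisorsAntidiagonal.mp hp
  obtain ⟨hq1, _⟩ := Nat.mem_divisorsAntidiagonal.mp hq
  have hp10 : p.1 ≠ 0 := fun h => hN (by rw [← hp1, h, zero_mul])
  have hp20 : p.2 ≠ 0 := fun h => hN (by rw [← hp1, h, mul_zero])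
  have hq10 : q.1 ≠ 0 := fun h => hN (by rw [← hq1, h, zero_mul])
  have hq20 : q.2 ≠ 0 := fun h => hN (by rw [← hq1, h, mul_zero])
  by_contra hcop
  set a : L[X] := Polynomial.X ^ p.1 - Polynomial.C (t ^ p.2) with ha
  set b : L[X] := Polynomial.X ^ q.1 - Polynomial.C (t ^ q.2) with hb
  have ha0 : a ≠ 0 := (Polynomial.monic_X_pow_sub_C _ hp10).ne_zero
  have hgu : ¬ IsUnit (EuclideanDomain.gcd a b) := fun h =>
    hcop (EuclideanDomain.gcd_isUnit_iff.mp h)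
  have hg0 : EuclideanDomain.gcd a b ≠ 0 := fun h =>
    ha0 (EuclideanDomain.gcd_eq_zero_iff.mp h).1
  obtain ⟨r, hr, hrdvd⟩ := WfDvdMonoid.exists_irreducible_factor hgu hg0
  have hra : r ∣ a := hrdvd.trans (EuclideanDomain.gcd_dvd_left a b)
  have hrb : r ∣ b := hrdvd.trans (EuclideanDomain.gcd_dvd_right a b)
  haveI := Fact.mk hr
  set u : AdjoinRoot r := AdjoinRoot.root r
  have hinj : Function.Injective (AdjoinRoot.of r) := (AdjoinRoot.of r).injective
  set t' : AdjoinRoot r := AdjoinRoot.of r t with ht'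
  have ht'0 : t' ≠ 0 := fun h => ht0 (hinj (by rw [map_zero]; exact h))
  have ht'1 : ∀ k : ℕ, k ≠ 0 → t' ^ k ≠ 1 := fun k hk h =>
    ht1 k hk (hinj (by rw [map_pow, map_one]; exact h))
  have keval : ∀ c : L[X], r ∣ c → Polynomial.eval₂ (AdjoinRoot.of r) u c = 0 := by
    rintro c ⟨s, rfl⟩
    rw [Polynomial.eval₂_mul]
    rw [AdjoinRoot.eval₂_root]
    rw [zero_mul]
  have e1 : u ^ p.1 = t' ^ p.2 := by
    have := keval a hra
    rw [ha] at this
    simpa [Polynomial.eval₂_sub, Polynomial.eval₂_pow, map_pow, sub_eq_zero] using this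
  have e2 : u ^ q.1 = t' ^ q.2 := by
    have := keval b hrb
    rw [hb] at this
    simpa [Polynomial.eval₂_sub, Polynomial.eval₂_pow, map_pow, sub_eq_zero] using this
  have e3 : t' ^ (p.2 * q.1) = t' ^ (q.2 * p.1) := by
    rw [pow_mul, pow_mul, ← e1, ← e2, ← pow_mul, ← pow_mul, mul_comm]
  have e4 : p.2 * q.1 = q.2 * p.1 := pow_eq_pow_exponent_eq ht'0 ht'1 e3
  -- derive p = q
  have hq2pos : 0 < q.2 := Nat.pos_of_ne_zero hq20
  have h6 : q.2 * q.1 ^ 2 = q.2 * p.1 ^ 2 := by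
    have h1 : p.1 * (p.2 * q.1) = p.1 * (q.2 * p.1) := by rw [e4]
    calc q.2 * q.1 ^ 2 = (q.1 * q.2) * q.1 := by ring
    _ = (p.1 * p.2) * q.1 := by rw [hq1, hp1]
    _ = p.1 * (p.2 * q.1) := by ring
    _ = p.1 * (q.2 * p.1) := h1
    _ = q.2 * p.1 ^ 2 := by ring
  have h7 : q.1 ^ 2 = p.1 ^ 2 := Nat.eq_of_mul_eq_mul_left hq2pos h6
  have e8 : q.1 = p.1 := Nat.pow_left_injective (by norm_num) h7
  have e7 : p.2 = q.2 := by
    have : p.1 * p.2 = p.1 * q.2 := by rw [hp1, ← hq1, e8]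
    exact Nat.eq_of_mul_eq_mul_left (Nat.pos_of_ne_zero hp10) this
  exact hne (Prod.ext e8.symm e7)


lemma FF_squarefree {t : L} (ht0 : t ≠ 0)
    (ht1 : ∀ k : ℕ, k ≠ 0 → t ^ k ≠ 1) (N : ℕ) : Squarefree (FF t N) := by
  rw [FF]
  refine Polynomial.Separable.squarefree ?_
  refine Polynomial.separable_prod' (fun p hp q hq hne => FF_coprime ht0 ht1 hp hq hne) ?_
  intro p hp
  obtain ⟨h1, h2⟩ := Nat.mem_divisorsAntidiagonal.mp hp
  have hp10 : p.1 ≠ 0 := fun h => h2 (by rw [← h1, h, zero_mul])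
  exact Polynomial.separable_X_pow_sub_C _ (Nat.cast_ne_zero.mpr hp10) (pow_ne_zero _ ht0)

lemma FF_isReduced {A : Type u} [CommRing A] [IsReduced A] (a : A) (N : ℕ)
    (hA : ∀ (L' : Type u) [Field L'] (φ : A →+* L'),
      CharZero L' ∧ φ a ≠ 0 ∧ ∀ k : ℕ, k ≠ 0 → (φ a) ^ k ≠ 1) :
    IsReduced (AdjoinRoot (FF a N)) := by
  constructor
  rintro x ⟨j, hj⟩
  obtain ⟨q, rfl⟩ := AdjoinRoot.mk_surjective x
  rw [← map_pow, AdjoinRoot.mk_eq_zero] at hj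
  rw [AdjoinRoot.mk_eq_zero, ← Polynomial.modByMonic_eq_zero_iff_dvd (FF_monic a N)]
  refine Polynomial.ext fun i => ?_
  have hmem : (q %ₘ FF a N).coeff i ∈ nilradical A := by
    rw [nilradical_eq_sInf]
    refine Ideal.mem_sInf.mpr ?_
    intro p hp
    haveI : p.IsPrime := hp
    set L' := FractionRing (A ⧸ p) with hL'
    set φ : A →+* L' := (algebraMap (A ⧸ p) L').comp (Ideal.Quotient.mk p) with hφ
    obtain ⟨hc, h0, h1⟩ := hA L' φ
    haveI := hc
    have hsq : Squarefree ((FF a N).map φ) := by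
      rw [FF_map]; exact FF_squarefree h0 h1 N
    have hdvd : (FF a N).map φ ∣ q.map φ := by
      refine hsq.isRadical j _ ?_
      rw [← Polynomial.map_pow]
      exact Polynomial.map_dvd φ hj
    have hmod : (q %ₘ FF a N).map φ = 0 := by
      rw [Polynomial.map_modByMonic _ (FF_monic a N),
        Polynomial.modByMonic_eq_zero_iff_dvd ((FF_monic a N).map φ)]
      exact hdvd
    have hc0 : φ ((q %ₘ FF a N).coeff i) = 0 := by
      have := congrArg (fun r => Polynomial.coeff r i) hmod
      simpa [Polynomial.coeff_map] using this
    have : Ideal.Quotient.mk p ((q %ₘ FF a N).coeff i) = 0 := by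
      refine IsFractionRing.injective (A ⧸ p) L' ?_
      rw [map_zero]
      exact hc0
    exact Ideal.Quotient.eq_zero_iff_mem.mp this
  rw [nilradical_eq_zero A] at hmem
  simpa using hmem


abbrev Kz : Type := FractionRing (Polynomial ℤ)

noncomputable def tK : Kz := algebraMap (Polynomial ℤ) Kz Polynomial.X

lemma good_elt {L : Type} [Field L] (ψ : Kz →+* L) :
    CharZero L ∧ ψ tK ≠ 0 ∧ ∀ k : ℕ, k ≠ 0 → (ψ tK) ^ k ≠ 1 := by
  have hinj : Function.Injective ψ := ψ.injective
  have halg : Function.Injective (algebraMap (Polynomial ℤ) Kz) :=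
    IsFractionRing.injective _ _
  haveI : CharZero Kz := charZero_of_injective_algebraMap halg
  refine ⟨⟨fun a b hab => ?_⟩, ?_, ?_⟩
  · have : ψ ((a : Kz)) = ψ ((b : Kz)) := by
      rw [map_natCast, map_natCast]; exact hab
    exact Nat.cast_injective (hinj this)
  · intro h
    have : (Polynomial.X : Polynomial ℤ) = 0 := halg (by rw [map_zero]; exact hinj (by rw [map_zero]; exact h))
    exact Polynomial.X_ne_zero this
  · intro k hk h
    have h2 : tK ^ k = 1 := hinj (by rw [map_pow, map_one]; exact h)
    have h3 : (Polynomial.X : Polynomial ℤ) ^ k = 1 := halg (by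
      rw [map_pow, map_one]; exact h2)
    have := congrArg Polynomial.natDegree h3
    rw [Polynomial.natDegree_X_pow, Polynomial.natDegree_one] at this
    exact hk this

-- the reduced tower
abbrev AK (n : ℕ) : Type := AdjoinRoot (FF tK n)
noncomputable def alK (n : ℕ) : AK n := AdjoinRoot.root (FF tK n)

lemma AK_isReduced (n : ℕ) : IsReduced (AK n) :=
  FF_isReduced tK n (fun L' _ φ => good_elt φ)

abbrev BK (m n : ℕ) : Type := AdjoinRoot (FF (alK n) m)

lemma BK_isReduced (m n : ℕ) : IsReduced (BK m n) := by
  haveI := AK_isReduced n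
  refine FF_isReduced (alK n) m (fun L' _ φ => ?_)
  set ψ : Kz →+* L' := φ.comp (AdjoinRoot.of (FF tK n)) with hψ
  obtain ⟨hC, h0, h1⟩ := good_elt ψ
  haveI := hC
  have hrel : Polynomial.eval₂ (AdjoinRoot.of (FF tK n)) (alK n) (FF tK n) = 0 :=
    AdjoinRoot.eval₂_root _
  rw [FF_eval₂] at hrel
  have hrel2 := congrArg φ hrel
  rw [map_prod, map_zero] at hrel2
  simp only [map_sub, map_pow] at hrel2
  obtain ⟨de, hde, hz⟩ := Finset.prod_eq_zero_iff.mp hrel2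
  rw [sub_eq_zero] at hz
  obtain ⟨hprod, hN⟩ := Nat.mem_divisorsAntidiagonal.mp hde
  have hd1 : de.1 ≠ 0 := fun h => hN (by rw [← hprod, h, zero_mul])
  have hd2 : de.2 ≠ 0 := fun h => hN (by rw [← hprod, h, mul_zero])
  have hz' : (φ (alK n)) ^ de.1 = (ψ tK) ^ de.2 := hz
  refine ⟨hC, ?_, ?_⟩
  · intro h
    rw [h, zero_pow hd1] at hz'
    exact pow_ne_zero de.2 h0 hz'.symm
  · intro k hk hone
    have : (ψ tK) ^ (de.2 * k) = 1 := by
      rw [pow_mul, ← hz', ← pow_mul, mul_comm de.1 k, pow_mul, hone, one_pow]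
    exact h1 (de.2 * k) (mul_ne_zero hd2 hk) this

-- the integral tower
abbrev A0 (n : ℕ) : Type := AdjoinRoot (FF (Polynomial.X : Polynomial ℤ) n)
noncomputable def al0 (n : ℕ) : A0 n := AdjoinRoot.root _
abbrev B0 (m n : ℕ) : Type := AdjoinRoot (FF (al0 n) m)

noncomputable def jA (n : ℕ) : A0 n →+* AK n :=
  AdjoinRoot.lift ((AdjoinRoot.of (FF tK n)).comp (algebraMap (Polynomial ℤ) Kz)) (alK n)
    (by
      rw [FF_eval₂]
      have : ((AdjoinRoot.of (FF tK n)).comp (algebraMap (Polynomial ℤ) Kz)) Polynomial.X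
          = AdjoinRoot.of (FF tK n) tK := rfl
      rw [this, ← FF_eval₂ (AdjoinRoot.of (FF tK n)) (alK n) tK n]
      exact AdjoinRoot.eval₂_root _)

lemma jA_root (n : ℕ) : jA n (al0 n) = alK n := AdjoinRoot.lift_root _

lemma jA_of (n : ℕ) (c : Polynomial ℤ) :
    jA n (AdjoinRoot.of _ c) = AdjoinRoot.of (FF tK n) (algebraMap (Polynomial ℤ) Kz c) :=
  AdjoinRoot.lift_of _

noncomputable def jB (m n : ℕ) : B0 m n →+* BK m n :=
  AdjoinRoot.lift ((AdjoinRoot.of (FF (alK n) m)).comp (jA n)) (AdjoinRoot.root (FF (alK n) m))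
    (by
      rw [FF_eval₂]
      have : ((AdjoinRoot.of (FF (alK n) m)).comp (jA n)) (al0 n)
          = AdjoinRoot.of (FF (alK n) m) (alK n) := by
        rw [RingHom.comp_apply, jA_root]
      rw [this, ← FF_eval₂ (AdjoinRoot.of (FF (alK n) m)) (AdjoinRoot.root (FF (alK n) m)) (alK n) m]
      exact AdjoinRoot.eval₂_root _)

lemma jB_root (m n : ℕ) : jB m n (AdjoinRoot.root (FF (al0 n) m)) = AdjoinRoot.root (FF (alK n) m) :=
  AdjoinRoot.lift_root _

lemma jB_of (m n : ℕ) (c : A0 n) :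
    jB m n (AdjoinRoot.of _ c) = AdjoinRoot.of (FF (alK n) m) (jA n c) :=
  AdjoinRoot.lift_of _


lemma FF_degree_ne_zero {R : Type*} [CommRing R] [IsDomain R] (a : R) {N : ℕ} (hN : N ≠ 0) :
    (FF a N).degree ≠ 0 := by
  have hmem : (1, N) ∈ Nat.divisorsAntidiagonal N := by
    rw [Nat.mem_divisorsAntidiagonal]; exact ⟨one_mul N, hN⟩
  have hfac : ∀ de ∈ Nat.divisorsAntidiagonal N,
      ((Polynomial.X : R[X]) ^ de.1 - Polynomial.C (a ^ de.2)) ≠ 0 := by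
    intro de hde
    obtain ⟨h1, h2⟩ := Nat.mem_divisorsAntidiagonal.mp hde
    exact (Polynomial.monic_X_pow_sub_C _ (fun h => h2 (by rw [← h1, h, zero_mul]))).ne_zero
  have hnat : (FF a N).natDegree ≠ 0 := by
    rw [FF, Polynomial.natDegree_prod _ _ hfac]
    have : ∀ de ∈ Nat.divisorsAntidiagonal N,
        ((Polynomial.X : R[X]) ^ de.1 - Polynomial.C (a ^ de.2)).natDegree = de.1 := fun de _ =>
      Polynomial.natDegree_X_pow_sub_C
    rw [Finset.sum_congr rfl this]
    intro h
    have := Finset.sum_eq_zero_iff.mp h (1, N) hmem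
    simp at this
  intro h
  exact hnat (Polynomial.natDegree_eq_zero_iff_degree_le_zero.mpr (le_of_eq h))

lemma jB_injective (m n : ℕ) (hm : 1 ≤ m) (hn : 1 ≤ n) : Function.Injective (jB m n) := by
  haveI hntA : Nontrivial (AK n) :=
    AdjoinRoot.nontrivial _ (FF_degree_ne_zero tK (by omega))
  haveI hntA0 : Nontrivial (A0 n) :=
    AdjoinRoot.nontrivial _ (FF_degree_ne_zero _ (by omega))
  suffices hker : ∀ c, jB m n c = 0 → c = 0 by
    intro b b' h
    have := hker (b - b') (by rw [map_sub, h, sub_self])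
    exact sub_eq_zero.mp this
  intro b hb
  classical
  have hgm : (FF (Polynomial.X : Polynomial ℤ) n).Monic := FF_monic _ _
  have hfm : (FF (al0 n) m).Monic := FF_monic _ _
  have hgKm : (FF tK n).Monic := FF_monic _ _
  have hfKm : (FF (alK n) m).Monic := FF_monic _ _
  set pbA := AdjoinRoot.powerBasis' hgm with hpbA
  set pbB := AdjoinRoot.powerBasis' hfm with hpbB
  set pbAK := AdjoinRoot.powerBasis' hgKm with hpbAK
  set pbBK := AdjoinRoot.powerBasis' hfKm with hpbBK
  set bas0 : Module.Basis (Fin pbA.dim × Fin pbB.dim) (Polynomial ℤ) (B0 m n) :=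
    pbA.basis.smulTower pbB.basis with hbas0
  set basK : Module.Basis (Fin pbAK.dim × Fin pbBK.dim) Kz (BK m n) :=
    pbAK.basis.smulTower pbBK.basis with hbasK
  have hdim1 : pbAK.dim = pbA.dim := by
    have h1 : FF tK n = (FF (Polynomial.X : Polynomial ℤ) n).map (algebraMap (Polynomial ℤ) Kz) := by
      rw [FF_map]; rfl
    rw [hpbAK, hpbA, AdjoinRoot.powerBasis'_dim, AdjoinRoot.powerBasis'_dim, h1,
      hgm.natDegree_map]
  have hdim2 : pbBK.dim = pbB.dim := by
    have h1 : FF (alK n) m = (FF (al0 n) m).map (jA n) := by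
      rw [FF_map, jA_root]
    rw [hpbBK, hpbB, AdjoinRoot.powerBasis'_dim, AdjoinRoot.powerBasis'_dim, h1,
      hfm.natDegree_map]
  set ee : (Fin pbA.dim × Fin pbB.dim) ≃ (Fin pbAK.dim × Fin pbBK.dim) :=
    Equiv.prodCongr (finCongr hdim1.symm) (finCongr hdim2.symm) with hee
  set basK' : Module.Basis (Fin pbA.dim × Fin pbB.dim) Kz (BK m n) := basK.reindex ee.symm with hbasK'
  have key : ∀ v, jB m n (bas0 v) = basK' v := by
    rintro ⟨i, j⟩
    have hgenA : pbA.gen = al0 n := by rw [hpbA]; exact AdjoinRoot.powerBasis'_gen hgm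
    have hgenB : pbB.gen = AdjoinRoot.root (FF (al0 n) m) := by
      rw [hpbB]; exact AdjoinRoot.powerBasis'_gen hfm
    have hgenAK : pbAK.gen = alK n := by rw [hpbAK]; exact AdjoinRoot.powerBasis'_gen hgKm
    have hgenBK : pbBK.gen = AdjoinRoot.root (FF (alK n) m) := by
      rw [hpbBK]; exact AdjoinRoot.powerBasis'_gen hfKm
    have h0 : bas0 (i, j) =
        (AdjoinRoot.of (FF (al0 n) m) (al0 n)) ^ (i : ℕ) *
          (AdjoinRoot.root (FF (al0 n) m)) ^ (j : ℕ) := by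
      rw [hbas0, Module.Basis.smulTower_apply, pbA.basis_eq_pow, pbB.basis_eq_pow,
        Algebra.smul_def, AdjoinRoot.algebraMap_eq, hgenA, hgenB, map_pow]
    have h1 : basK' (i, j) =
        (AdjoinRoot.of (FF (alK n) m) (alK n)) ^ (i : ℕ) *
          (AdjoinRoot.root (FF (alK n) m)) ^ (j : ℕ) := by
      rw [hbasK', Module.Basis.reindex_apply, Equiv.symm_symm]
      have h2 : ee (i, j) = (finCongr hdim1.symm i, finCongr hdim2.symm j) := by rw [hee]; rfl
      rw [h2, hbasK, Module.Basis.smulTower_apply, pbAK.basis_eq_pow, pbBK.basis_eq_pow,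
        Algebra.smul_def, AdjoinRoot.algebraMap_eq, hgenAK, hgenBK, map_pow]
      simp
    rw [h0, h1, map_mul, map_pow, map_pow, jB_of, jA_root, jB_root]
  have expand : jB m n b = ∑ v, (algebraMap (Polynomial ℤ) Kz) (bas0.repr b v) • basK' v := by
    conv_lhs => rw [← bas0.sum_repr b]
    rw [map_sum]
    refine Finset.sum_congr rfl fun v _ => ?_
    rw [Algebra.smul_def, map_mul, key v, Algebra.smul_def]
    congr 1
    rw [IsScalarTower.algebraMap_eq (Polynomial ℤ) (A0 n) (B0 m n),
        IsScalarTower.algebraMap_eq Kz (AK n) (BK m n)]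
    rw [RingHom.comp_apply, RingHom.comp_apply]
    rw [AdjoinRoot.algebraMap_eq, AdjoinRoot.algebraMap_eq, AdjoinRoot.algebraMap_eq,
      AdjoinRoot.algebraMap_eq]
    rw [jB_of, jA_of]
  have hcoef : ∀ v, algebraMap (Polynomial ℤ) Kz (bas0.repr b v) = 0 := by
    have hli := basK'.linearIndependent
    rw [Fintype.linearIndependent_iff] at hli
    exact hli _ (by rw [← expand, hb])
  have hz : ∀ v, bas0.repr b v = 0 := fun v =>
    IsFractionRing.injective (Polynomial ℤ) Kz (by rw [hcoef v, map_zero])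
  calc b = ∑ v, bas0.repr b v • bas0 v := (bas0.sum_repr b).symm
  _ = 0 := Finset.sum_eq_zero fun v _ => by rw [hz v, zero_smul]


end StmtAux

open MvPolynomial in
theorem stmt_11 (m n : ℕ) (hm : 1 ≤ m) (hn : 1 ≤ n) :
    IsReduced (MvPolynomial (Fin 3) ℤ ⧸
      Ideal.span ({FPoly m (X 0) (X 1), FPoly n (X 1) (X 2)} :
        Set (MvPolynomial (Fin 3) ℤ))) := by
  classical
  set I : Ideal (MvPolynomial (Fin 3) ℤ) :=
    Ideal.span ({FPoly m (X 0) (X 1), FPoly n (X 1) (X 2)} :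
      Set (MvPolynomial (Fin 3) ℤ)) with hI
  set Q := MvPolynomial (Fin 3) ℤ ⧸ I with hQ
  set mkI : MvPolynomial (Fin 3) ℤ →+* Q := Ideal.Quotient.mk I with hmkI
  -- Φ : MvPolynomial → B0
  set v : Fin 3 → B0 m n :=
    ![AdjoinRoot.root (FF (al0 n) m),
      AdjoinRoot.of (FF (al0 n) m) (al0 n),
      AdjoinRoot.of (FF (al0 n) m) (AdjoinRoot.of (FF (Polynomial.X : Polynomial ℤ) n)
        Polynomial.X)] with hv
  set Φ : MvPolynomial (Fin 3) ℤ →+* B0 m n :=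
    MvPolynomial.eval₂Hom (Int.castRingHom (B0 m n)) v with hΦ
  have hv0 : v 0 = AdjoinRoot.root (FF (al0 n) m) := rfl
  have hv1 : v 1 = AdjoinRoot.of (FF (al0 n) m) (al0 n) := rfl
  have hv2 : v 2 = AdjoinRoot.of (FF (al0 n) m)
      (AdjoinRoot.of (FF (Polynomial.X : Polynomial ℤ) n) Polynomial.X) := rfl
  -- generators die
  have hgen1 : Φ (FPoly m (X 0) (X 1)) = 0 := by
    rw [FPoly, map_prod]
    have : ∀ de ∈ Nat.divisorsAntidiagonal m,
        Φ ((X 0 : MvPolynomial (Fin 3) ℤ) ^ de.1 - (X 1) ^ de.2)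
          = (v 0) ^ de.1 - (v 1) ^ de.2 := by
      intro de _
      rw [map_sub, map_pow, map_pow, hΦ, MvPolynomial.eval₂Hom_X', MvPolynomial.eval₂Hom_X']
    rw [Finset.prod_congr rfl this]
    have := FF_eval₂ (AdjoinRoot.of (FF (al0 n) m)) (AdjoinRoot.root (FF (al0 n) m)) (al0 n) m
    rw [AdjoinRoot.eval₂_root] at this
    rw [hv0, hv1]
    exact this.symm
  have hgen2 : Φ (FPoly n (X 1) (X 2)) = 0 := by
    rw [FPoly, map_prod]
    have hc : ∀ de ∈ Nat.divisorsAntidiagonal n,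
        Φ ((X 1 : MvPolynomial (Fin 3) ℤ) ^ de.1 - (X 2) ^ de.2)
          = AdjoinRoot.of (FF (al0 n) m)
              ((al0 n) ^ de.1 -
                (AdjoinRoot.of (FF (Polynomial.X : Polynomial ℤ) n) Polynomial.X) ^ de.2) := by
      intro de _
      rw [map_sub, map_pow, map_pow, hΦ, MvPolynomial.eval₂Hom_X', MvPolynomial.eval₂Hom_X',
        map_sub, map_pow, map_pow]
      rfl
    rw [Finset.prod_congr rfl hc, ← map_prod]
    have h3 := FF_eval₂ (AdjoinRoot.of (FF (Polynomial.X : Polynomial ℤ) n)) (al0 n)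
      (Polynomial.X : Polynomial ℤ) n
    have h4 : Polynomial.eval₂ (AdjoinRoot.of (FF (Polynomial.X : Polynomial ℤ) n)) (al0 n)
        (FF (Polynomial.X : Polynomial ℤ) n) = 0 := AdjoinRoot.eval₂_root _
    rw [← h3, h4, map_zero]
  -- Ψ : B0 → Q
  set ψ1 : Polynomial ℤ →+* Q :=
    Polynomial.eval₂RingHom (Int.castRingHom Q) (mkI (X 2)) with hψ1
  have hψ1X : ψ1 Polynomial.X = mkI (X 2) := by
    rw [hψ1, Polynomial.coe_eval₂RingHom, Polynomial.eval₂_X]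
  have hFn : mkI (FPoly n (X 1) (X 2)) = 0 := by
    rw [hmkI, Ideal.Quotient.eq_zero_iff_mem, hI]
    exact Ideal.subset_span (by simp)
  have hFm : mkI (FPoly m (X 0) (X 1)) = 0 := by
    rw [hmkI, Ideal.Quotient.eq_zero_iff_mem, hI]
    exact Ideal.subset_span (by simp)
  have hev2 : Polynomial.eval₂ ψ1 (mkI (X 1)) (FF (Polynomial.X : Polynomial ℤ) n) = 0 := by
    rw [FF_eval₂, ← hFn, FPoly, map_prod]
    refine Finset.prod_congr rfl fun de _ => ?_
    rw [map_sub, map_pow, map_pow, hψ1X]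
  set ψ2 : A0 n →+* Q := AdjoinRoot.lift ψ1 (mkI (X 1)) hev2 with hψ2
  have hψ2root : ψ2 (al0 n) = mkI (X 1) := AdjoinRoot.lift_root _
  have hev3 : Polynomial.eval₂ ψ2 (mkI (X 0)) (FF (al0 n) m) = 0 := by
    rw [FF_eval₂, ← hFm, FPoly, map_prod]
    refine Finset.prod_congr rfl fun de _ => ?_
    rw [map_sub, map_pow, map_pow, hψ2root]
  set Ψ : B0 m n →+* Q := AdjoinRoot.lift ψ2 (mkI (X 0)) hev3 with hΨ
  -- Ψ ∘ Φ = mkI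
  have hcomp : Ψ.comp Φ = mkI := by
    refine MvPolynomial.ringHom_ext (fun r => ?_) (fun i => ?_)
    · exact RingHom.congr_fun (RingHom.ext_int (Ψ.comp (Φ.comp MvPolynomial.C))
        (mkI.comp MvPolynomial.C)) r
    · fin_cases i
      · show Ψ (Φ (X 0)) = mkI (X 0)
        rw [hΦ, MvPolynomial.eval₂Hom_X', hv0, hΨ, AdjoinRoot.lift_root]
      · show Ψ (Φ (X 1)) = mkI (X 1)
        rw [hΦ, MvPolynomial.eval₂Hom_X', hv1, hΨ, AdjoinRoot.lift_of, hψ2root]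
      · show Ψ (Φ (X 2)) = mkI (X 2)
        rw [hΦ, MvPolynomial.eval₂Hom_X', hv2, hΨ, AdjoinRoot.lift_of, hψ2,
          AdjoinRoot.lift_of, hψ1X]
  -- assembly
  constructor
  rintro x ⟨j, hj⟩
  obtain ⟨P, rfl⟩ := Ideal.Quotient.mk_surjective (I := I) x
  have hPj : P ^ j ∈ I := by
    rw [← Ideal.Quotient.eq_zero_iff_mem]
    rw [← map_pow] at hj
    exact hj
  have hIker : I ≤ RingHom.ker Φ := by
    rw [hI, Ideal.span_le]
    rintro p hp
    rcases hp with rfl | hp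
    · exact hgen1
    · rcases hp with rfl
      exact hgen2
  have hΦP : (Φ P) ^ j = 0 := by rw [← map_pow]; exact hIker hPj
  have hjBP : jB m n (Φ P) = 0 := by
    haveI := BK_isReduced m n
    refine IsNilpotent.eq_zero ⟨j, ?_⟩
    rw [← map_pow, hΦP, map_zero]
  have hΦP0 : Φ P = 0 := jB_injective m n hm hn (by rw [hjBP, map_zero])
  show mkI P = 0
  rw [← RingHom.congr_fun hcomp P, RingHom.comp_apply, hΦP0, map_zero]
end

section
/- Let p be a prime and k = 𝔽_{p²}. Let f(x) = Σ_{i≥1} c_i x^i ∈ k⟦x⟧ with c_1 ≠ 0, and for s ≥ 0 write f^{(p^s)}(x) = Σ c_i^{p^s} x^i. Fix r ≥ 0 and set x₁' = f(x₁), x₂' = f^{(p^r)}(x₂) in k⟦x₁,x₂⟧. Then for each 0 ≤ i ≤ r, the element (x₁')^{p^i} − (x₂')^{p^{r−i}} equals (x₁^{p^i} − x₂^{p^{r−i}}) times a unit of k⟦x₁,x₂⟧; consequently F_{p^r}(x₁', x₂') and F_{p^r}(x₁, x₂) generate the same ideal of k⟦x₁,x₂⟧. -/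
open PowerSeries

lemma nat_div_aux {a t : ℕ} (ha : 0 < a) (h : a ∣ t) (ht : t ≠ 0) :
    a ≤ t ∧ a ∣ t - a ∧ (t - a) / a + 1 = t / a := by
  obtain ⟨s, rfl⟩ := h
  obtain ⟨s', rfl⟩ : ∃ s', s = s' + 1 := by
    rcases Nat.eq_zero_or_pos s with h | h
    · simp [h] at ht
    · exact ⟨s - 1, by omega⟩
  have h2 : a * (s' + 1) - a = a * s' := by
    rw [mul_add, mul_one, Nat.add_sub_cancel]
  refine ⟨Nat.le_mul_of_pos_right a (by omega), ⟨s', h2⟩, ?_⟩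
  rw [h2, Nat.mul_div_cancel_left _ ha, Nat.mul_div_cancel_left _ ha]

section aux

variable {R : Type*} [CommRing R] (p : ℕ) [Fact p.Prime] [CharP R p]

lemma coeff_pow_char (f : PowerSeries R) (n : ℕ) :
    PowerSeries.coeff (R := R) n (f ^ p) = if p ∣ n then (PowerSeries.coeff (R := R) (n / p) f) ^ p else 0 := by
  have hp : 0 < p := (Fact.out : p.Prime).pos
  set t : Polynomial R := f.trunc (n + 1) with ht
  have hdvd : (PowerSeries.X : PowerSeries R) ^ (n + 1) ∣ f - (t : PowerSeries R) := by
    rw [PowerSeries.X_pow_dvd_iff]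
    intro m hm
    simp [ht, PowerSeries.coeff_trunc, hm]
  have hdvd2 : (PowerSeries.X : PowerSeries R) ^ (n + 1) ∣ f ^ p - (t : PowerSeries R) ^ p :=
    hdvd.trans (sub_dvd_pow_sub_pow f (t : PowerSeries R) p)
  have hco : PowerSeries.coeff (R := R) n (f ^ p) = PowerSeries.coeff (R := R) n ((t : PowerSeries R) ^ p) := by
    have := (PowerSeries.X_pow_dvd_iff.mp hdvd2) n (by omega)
    rw [map_sub, sub_eq_zero] at this
    exact this
  rw [hco, ← Polynomial.coe_pow, ← Polynomial.map_frobenius_expand p t, Polynomial.coeff_coe,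
    Polynomial.coeff_map, Polynomial.coeff_expand hp]
  split_ifs with h
  · rw [frobenius_def]
    congr 1
    rw [ht, PowerSeries.coeff_trunc, if_pos (Nat.lt_succ_of_le (Nat.div_le_self n p))]
  · simp

lemma coeff_pow_char_pow (f : PowerSeries R) (i n : ℕ) :
    PowerSeries.coeff (R := R) n (f ^ p ^ i) =
      if p ^ i ∣ n then (PowerSeries.coeff (R := R) (n / p ^ i) f) ^ p ^ i else 0 := by
  have hp : 0 < p := (Fact.out : p.Prime).pos
  induction i generalizing n with
  | zero => simp
  | succ i ih =>
    have hpi : 0 < p ^ i := pow_pos hp i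
    rw [pow_succ, pow_mul, coeff_pow_char p (f ^ p ^ i) n]
    by_cases h2 : p ^ i * p ∣ n
    · have h1 : p ∣ n := dvd_trans (dvd_mul_left p (p ^ i)) h2
      obtain ⟨q, rfl⟩ := h2
      have e1 : p ^ i * p * q / p = p ^ i * q := by
        rw [mul_comm (p ^ i) p, mul_assoc, Nat.mul_div_cancel_left _ hp]
      rw [if_pos h1, if_pos (dvd_mul_right (p ^ i * p) q), e1, ih,
        if_pos (dvd_mul_right (p ^ i) q), Nat.mul_div_cancel_left _ hpi,
        Nat.mul_div_cancel_left _ (Nat.mul_pos hpi hp), ← pow_mul]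
    · rw [if_neg h2]
      by_cases h1 : p ∣ n
      · have hnd : ¬ p ^ i ∣ n / p := by
          rintro ⟨m, hm⟩
          apply h2
          obtain ⟨q, rfl⟩ := h1
          rw [Nat.mul_div_cancel_left _ hp] at hm
          exact ⟨m, by rw [hm]; ring⟩
        rw [if_pos h1, ih, if_neg hnd, zero_pow hp.ne']
      · rw [if_neg h1]

end aux

section key

variable (p : ℕ) [Fact p.Prime] {k : Type*} [Field k] [CharP k p]

lemma key_factor (f : PowerSeries k) (hf0 : PowerSeries.constantCoeff (R := k) f = 0)
    (hf1 : PowerSeries.coeff (R := k) 1 f ≠ 0) (i j m : ℕ)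
    (hm : ∀ x : k, (x ^ p ^ m) ^ p ^ j = x ^ p ^ i) :
    ∃ u : (PowerSeries (PowerSeries k))ˣ,
      (PowerSeries.C (R := PowerSeries k) f) ^ p ^ i -
          (PowerSeries.map ((PowerSeries.C (R := k)).comp (iterateFrobenius k p m)) f) ^ p ^ j =
        ((PowerSeries.C (R := PowerSeries k) (PowerSeries.X : PowerSeries k)) ^ p ^ i -
            (PowerSeries.X : PowerSeries (PowerSeries k)) ^ p ^ j) * u := by
  have hp : 0 < p := (Fact.out : p.Prime).pos
  haveI : CharP (PowerSeries k) p := charP_of_injective_ringHom (PowerSeries.C_injective) p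
  haveI : CharP (PowerSeries (PowerSeries k)) p :=
    charP_of_injective_ringHom (PowerSeries.C_injective) p
  have hapos : 0 < p ^ i := pow_pos hp i
  have hbpos : 0 < p ^ j := pow_pos hp j
  have hc0 : PowerSeries.coeff (R := k) 0 f = 0 := by
    rwa [PowerSeries.coeff_zero_eq_constantCoeff]
  set w : PowerSeries (PowerSeries k) := PowerSeries.mk fun n =>
    if p ^ j ∣ n then (PowerSeries.mk fun t =>
      if p ^ i ∣ t then (PowerSeries.coeff (R := k) (t / p ^ i + n / p ^ j + 1) f) ^ p ^ i else 0)
    else 0 with hw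
  have hwu : IsUnit w := by
    rw [PowerSeries.isUnit_iff_constantCoeff]
    have h1 : PowerSeries.constantCoeff (R := PowerSeries k) w =
        PowerSeries.mk fun t =>
          if p ^ i ∣ t then (PowerSeries.coeff (R := k) (t / p ^ i + 1) f) ^ p ^ i else 0 := by
      rw [hw, ← PowerSeries.coeff_zero_eq_constantCoeff_apply, PowerSeries.coeff_mk,
        if_pos (dvd_zero _)]
      simp
    rw [h1, PowerSeries.isUnit_iff_constantCoeff,
      ← PowerSeries.coeff_zero_eq_constantCoeff_apply, PowerSeries.coeff_mk,
      if_pos (dvd_zero _)]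
    simpa using (pow_ne_zero (p ^ i) hf1).isUnit
  refine ⟨hwu.unit, ?_⟩
  rw [IsUnit.unit_spec]
  have hLg : ∀ n, PowerSeries.coeff (R := PowerSeries k) n
      ((PowerSeries.map ((PowerSeries.C (R := k)).comp (iterateFrobenius k p m)) f) ^ p ^ j) =
      if p ^ j ∣ n then
        PowerSeries.C (R := k) ((PowerSeries.coeff (R := k) (n / p ^ j) f) ^ p ^ i) else 0 := by
    intro n
    rw [coeff_pow_char_pow p]
    split_ifs with h
    · rw [PowerSeries.coeff_map, RingHom.comp_apply, iterateFrobenius_def, ← map_pow, hm]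
    · rfl
  rw [← map_pow (PowerSeries.C (R := PowerSeries k)) f (p ^ i),
    ← map_pow (PowerSeries.C (R := PowerSeries k)) (PowerSeries.X : PowerSeries k) (p ^ i)]
  ext n : 1
  rw [map_sub, PowerSeries.coeff_C, hLg, sub_mul, map_sub, PowerSeries.coeff_C_mul,
    mul_comm ((PowerSeries.X : PowerSeries (PowerSeries k)) ^ p ^ j) w,
    PowerSeries.coeff_mul_X_pow']
  rcases eq_or_ne n 0 with rfl | hn
  · rw [if_pos rfl, if_pos (dvd_zero _), if_neg (not_le.mpr hbpos), sub_zero, hw,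
      PowerSeries.coeff_mk, if_pos (dvd_zero _)]
    rw [Nat.zero_div, hc0, zero_pow hapos.ne', map_zero, sub_zero]
    ext t : 1
    rw [coeff_pow_char_pow p, mul_comm ((PowerSeries.X : PowerSeries k) ^ p ^ i), PowerSeries.coeff_mul_X_pow', PowerSeries.coeff_mk]
    by_cases h1 : p ^ i ∣ t
    · rcases eq_or_ne t 0 with rfl | ht
      · rw [if_pos (dvd_zero _), if_neg (by omega), Nat.zero_div, hc0, zero_pow hapos.ne']
      · obtain ⟨h2, h3, h4⟩ := nat_div_aux hapos h1 ht
        rw [if_pos h1, if_pos h2, if_pos h3, add_zero, h4]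
    · rw [if_neg h1]
      by_cases h2 : p ^ i ≤ t
      · rw [if_pos h2, if_neg]
        intro hcon
        exact h1 (by
          have h5 : t = (t - p ^ i) + p ^ i := by omega
          rw [h5]
          exact dvd_add hcon dvd_rfl)
      · rw [if_neg h2]
  · rw [if_neg hn]
    by_cases h1 : p ^ j ∣ n
    · obtain ⟨h2, h3, h4⟩ := nat_div_aux hbpos h1 hn
      rw [if_pos h1, if_pos h2, hw, PowerSeries.coeff_mk, PowerSeries.coeff_mk,
        if_pos h1, if_pos h3]
      rw [zero_sub]
      ext t : 1
      rw [map_neg, PowerSeries.coeff_C, map_sub, mul_comm ((PowerSeries.X : PowerSeries k) ^ p ^ i), PowerSeries.coeff_mul_X_pow',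
        PowerSeries.coeff_mk, PowerSeries.coeff_mk]
      by_cases ht1 : p ^ i ∣ t
      · rcases eq_or_ne t 0 with rfl | ht
        · rw [if_pos rfl, if_neg (not_le.mpr hapos), if_pos (dvd_zero _), Nat.zero_div, zero_add, h4,
            zero_sub]
        · obtain ⟨ht2, ht3, ht4⟩ := nat_div_aux hapos ht1 ht
          rw [if_neg ht, if_pos ht2, if_pos ht3, if_pos ht1,
            show t / p ^ i + (n - p ^ j) / p ^ j + 1 =
              (t - p ^ i) / p ^ i + n / p ^ j + 1 by omega,
            sub_self, neg_zero]
      · rw [if_neg (by rintro rfl; exact ht1 (dvd_zero _)), if_neg ht1, sub_zero, neg_zero]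
        by_cases ht2 : p ^ i ≤ t
        · rw [if_pos ht2, if_neg]
          intro hcon
          exact ht1 (by
            have h5 : t = (t - p ^ i) + p ^ i := by omega
            rw [h5]
            exact dvd_add hcon dvd_rfl)
        · rw [if_neg ht2]
    · rw [if_neg h1, hw, PowerSeries.coeff_mk, if_neg h1, mul_zero, zero_sub, zero_sub]
      congr 1
      by_cases h2 : p ^ j ≤ n
      · rw [if_pos h2, PowerSeries.coeff_mk, if_neg]
        intro hcon
        exact h1 (by
          have h5 : n = (n - p ^ j) + p ^ j := by omega
          rw [h5]
          exact dvd_add hcon dvd_rfl)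
      · rw [if_neg h2]

end key

theorem stmt_15 (p : ℕ) [Fact p.Prime] (r : ℕ)
    (k : Type*) [Field k] [CharP k p] (hk : Nonempty (k ≃+* GaloisField p 2))
    (f : PowerSeries k)
    (hf0 : PowerSeries.constantCoeff (R := k) f = 0)
    (hf1 : PowerSeries.coeff (R := k) 1 f ≠ 0) :
    -- x₁' = f(x₁) and x₂' = f^{(p^r)}(x₂) in k⟦x₁,x₂⟧ = k⟦x₁⟧⟦x₂⟧, where
    -- x₁ = C (X : k⟦x₁⟧) and x₂ is the outer variable X.
    (∀ i : ℕ, i ≤ r →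
      ∃ u : (PowerSeries (PowerSeries k))ˣ,
        (PowerSeries.C (R := PowerSeries k) f) ^ p ^ i -
            (PowerSeries.map ((PowerSeries.C (R := k)).comp (iterateFrobenius k p r)) f) ^
              p ^ (r - i) =
          ((PowerSeries.C (R := PowerSeries k) (PowerSeries.X : PowerSeries k)) ^ p ^ i -
              (PowerSeries.X : PowerSeries (PowerSeries k)) ^ p ^ (r - i)) * u) ∧
    Ideal.span {∏ i ∈ Finset.range (r + 1),
        ((PowerSeries.C (R := PowerSeries k) f) ^ p ^ i -
          (PowerSeries.map ((PowerSeries.C (R := k)).comp (iterateFrobenius k p r)) f) ^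
            p ^ (r - i))} =
      Ideal.span {∏ i ∈ Finset.range (r + 1),
        ((PowerSeries.C (R := PowerSeries k) (PowerSeries.X : PowerSeries k)) ^ p ^ i -
          (PowerSeries.X : PowerSeries (PowerSeries k)) ^ p ^ (r - i))} := by
  obtain ⟨e⟩ := hk
  haveI : Fintype (GaloisField p 2) := Fintype.ofFinite _
  have hcard : Fintype.card (GaloisField p 2) = p ^ 2 := by
    rw [← Nat.card_eq_fintype_card]
    exact GaloisField.card p 2 two_ne_zero
  have hk2 : ∀ x : k, x ^ p ^ 2 = x := by
    intro x
    apply e.injective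
    rw [map_pow, ← hcard, FiniteField.pow_card]
  have hfix : ∀ (m : ℕ) (x : k), x ^ (p ^ 2) ^ m = x := by
    intro m
    induction m with
    | zero => simp
    | succ m ih =>
      intro x
      rw [pow_succ, pow_mul, ih, hk2]
  have hm : ∀ i : ℕ, i ≤ r → ∀ x : k, (x ^ p ^ r) ^ p ^ (r - i) = x ^ p ^ i := by
    intro i hi x
    rw [← pow_mul, ← pow_add, show r + (r - i) = i + 2 * (r - i) by omega, pow_add,
      pow_mul x (p ^ i), pow_mul p 2 (r - i), hfix]
  have hex : ∀ i : ℕ, ∃ u : (PowerSeries (PowerSeries k))ˣ, i ≤ r →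
      (PowerSeries.C (R := PowerSeries k) f) ^ p ^ i -
          (PowerSeries.map ((PowerSeries.C (R := k)).comp (iterateFrobenius k p r)) f) ^
            p ^ (r - i) =
        ((PowerSeries.C (R := PowerSeries k) (PowerSeries.X : PowerSeries k)) ^ p ^ i -
            (PowerSeries.X : PowerSeries (PowerSeries k)) ^ p ^ (r - i)) * u := by
    intro i
    by_cases hi : i ≤ r
    · obtain ⟨u, hu⟩ := key_factor p f hf0 hf1 i (r - i) r (hm i hi)
      exact ⟨u, fun _ => hu⟩
    · exact ⟨1, fun h => absurd h hi⟩
  choose U hU using hex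
  refine ⟨fun i hi => ⟨U i, hU i hi⟩, ?_⟩
  have hprod : ∏ i ∈ Finset.range (r + 1),
      ((PowerSeries.C (R := PowerSeries k) f) ^ p ^ i -
        (PowerSeries.map ((PowerSeries.C (R := k)).comp (iterateFrobenius k p r)) f) ^
          p ^ (r - i)) =
      (∏ i ∈ Finset.range (r + 1),
        ((PowerSeries.C (R := PowerSeries k) (PowerSeries.X : PowerSeries k)) ^ p ^ i -
          (PowerSeries.X : PowerSeries (PowerSeries k)) ^ p ^ (r - i))) *
      ∏ i ∈ Finset.range (r + 1), (U i : PowerSeries (PowerSeries k)) := by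
    rw [← Finset.prod_mul_distrib]
    exact Finset.prod_congr rfl fun i hi => hU i (by
      have := Finset.mem_range.mp hi; omega)
  rw [hprod]
  apply Ideal.span_singleton_mul_right_unit
  rw [← Units.coe_prod]
  exact Units.isUnit _
end

section
/- For every N ≥ 1, the number of subgroups H of (ℤ/N) × (ℤ/N) with |H| = N equals σ(N) = Σ_{d ∣ N} d, the sum of the divisors of N. (Equivalently, the number of subgroups of order N of (ℚ/ℤ)² is σ(N).) -/
open AddSubgroup

def Ld (N d b : ℕ) : AddSubgroup (ZMod N × ZMod N) :=
  closure {(((N / d : ℕ) : ZMod N), (b : ZMod N)), ((0 : ZMod N), (d : ZMod N))}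

lemma mem_Ld {N d b : ℕ} {p : ZMod N × ZMod N} :
    p ∈ Ld N d b ↔ ∃ s t : ℤ,
      p = ((s : ZMod N) * ((N / d : ℕ) : ZMod N),
           (s : ZMod N) * (b : ZMod N) + (t : ZMod N) * (d : ZMod N)) := by
  rw [Ld, AddSubgroup.mem_closure_pair]
  constructor
  · rintro ⟨m, n, h⟩
    refine ⟨m, n, ?_⟩
    rw [← h]
    simp [Prod.ext_iff, zsmul_eq_mul]
  · rintro ⟨m, n, rfl⟩
    exact ⟨m, n, by simp [Prod.ext_iff, zsmul_eq_mul]⟩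

open AddSubgroup

lemma cast_mul_eq_zero_iff {N u v : ℕ} (huv : u * v = N) (hv : v ≠ 0) (x : ℤ) :
    (x : ZMod N) * (v : ZMod N) = 0 ↔ (u : ℤ) ∣ x := by
  have h1 : (x : ZMod N) * (v : ZMod N) = ((x * v : ℤ) : ZMod N) := by push_cast; ring
  have h2 : (N : ℤ) = u * v := by exact_mod_cast congrArg (Nat.cast (R := ℤ)) huv.symm
  rw [h1, ZMod.intCast_zmod_eq_zero_iff_dvd, h2,
    mul_dvd_mul_iff_right (by exact_mod_cast hv : (v : ℤ) ≠ 0)]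

lemma dvd_sub_val {d : ℕ} [NeZero d] (s : ℤ) : (d : ℤ) ∣ ((s : ZMod d).val : ℤ) - s := by
  rw [← ZMod.intCast_zmod_eq_zero_iff_dvd]
  push_cast
  simp [ZMod.natCast_val, ZMod.cast_id]

lemma mul_congr_of_sub {R : Type*} [Ring R] {x y A : R} (h : (x - y) * A = 0) :
    x * A = y * A := by
  have h2 := sub_mul x y A
  rw [h] at h2
  exact sub_eq_zero.mp h2.symm

section
variable {N d b : ℕ}

lemma card_Ld (hN : N ≠ 0) (hd : d ∣ N) : Nat.card (Ld N d b) = N := by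
  haveI : NeZero N := ⟨hN⟩
  set a := N / d with ha
  have hda : d * a = N := Nat.mul_div_cancel' hd
  have had : a * d = N := by rw [mul_comm]; exact hda
  have hd0 : d ≠ 0 := fun h => hN (by simp [← hda, h])
  have ha0 : a ≠ 0 := fun h => hN (by simp [← hda, h])
  haveI : NeZero d := ⟨hd0⟩
  haveI : NeZero a := ⟨ha0⟩
  set A : ZMod N := ((a : ℕ) : ZMod N) with hA
  set D : ZMod N := ((d : ℕ) : ZMod N) with hD
  set B : ZMod N := ((b : ℕ) : ZMod N) with hB
  have memf : ∀ (s t : ℤ),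
      ((s : ZMod N) * A, (s : ZMod N) * B + (t : ZMod N) * D) ∈ Ld N d b :=
    fun s t => mem_Ld.mpr ⟨s, t, rfl⟩
  let f : ZMod d × ZMod a → (Ld N d b) := fun st =>
    ⟨(((st.1.val : ℤ) : ZMod N) * A, ((st.1.val : ℤ) : ZMod N) * B
      + ((st.2.val : ℤ) : ZMod N) * D), memf _ _⟩
  have hbij : Function.Bijective f := by
    constructor
    · rintro ⟨s, t⟩ ⟨s', t'⟩ h
      simp only [f, Subtype.mk.injEq, Prod.mk.injEq] at h
      obtain ⟨h1, h2⟩ := h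
      have hds : (d : ℤ) ∣ ((s.val : ℤ) - (s'.val : ℤ)) := by
        rw [← cast_mul_eq_zero_iff hda ha0, Int.cast_sub, sub_mul, sub_eq_zero]
        exact h1
      have hs : s = s' := by
        have h3 : ((s.val : ℤ) : ZMod d) = ((s'.val : ℤ) : ZMod d) := by
          rw [← sub_eq_zero, ← Int.cast_sub, ZMod.intCast_zmod_eq_zero_iff_dvd]
          exact hds
        simpa [ZMod.natCast_val, ZMod.cast_id] using h3
      subst hs
      have h2' : (((t.val : ℤ)) : ZMod N) * D = (((t'.val : ℤ)) : ZMod N) * D :=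
        add_left_cancel h2
      have hat : (a : ℤ) ∣ ((t.val : ℤ) - (t'.val : ℤ)) := by
        rw [← cast_mul_eq_zero_iff had hd0, Int.cast_sub, sub_mul, sub_eq_zero]
        exact h2'
      have ht : t = t' := by
        have h3 : ((t.val : ℤ) : ZMod a) = ((t'.val : ℤ) : ZMod a) := by
          rw [← sub_eq_zero, ← Int.cast_sub, ZMod.intCast_zmod_eq_zero_iff_dvd]
          exact hat
        simpa [ZMod.natCast_val, ZMod.cast_id] using h3
      rw [ht]
    · rintro ⟨p, hp⟩
      obtain ⟨s, t, rfl⟩ := mem_Ld.mp hp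
      set s' : ZMod d := (s : ZMod d) with hs'
      obtain ⟨u, hu⟩ : (d : ℤ) ∣ ((s'.val : ℤ) - s) := dvd_sub_val s
      set t' : ZMod a := ((t - u * b : ℤ) : ZMod a) with ht'
      refine ⟨(s', t'), ?_⟩
      obtain ⟨w, hw⟩ : (a : ℤ) ∣ ((t'.val : ℤ) - (t - u * b)) := dvd_sub_val _
      have key1 : ((s'.val : ℤ) : ZMod N) * A = (s : ZMod N) * A := by
        apply mul_congr_of_sub
        rw [← Int.cast_sub]
        exact (cast_mul_eq_zero_iff hda ha0 _).mpr ⟨u, hu⟩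
      have key2 : ((s'.val : ℤ) : ZMod N) * B + ((t'.val : ℤ) : ZMod N) * D
          = (s : ZMod N) * B + (t : ZMod N) * D := by
        have e1 : ((s'.val : ℤ) : ZMod N) = (s : ZMod N) + ((d : ℤ) : ZMod N) * (u : ZMod N) := by
          have h4 : (s'.val : ℤ) = s + d * u := by linarith [hu]
          rw [h4]; push_cast; ring
        have e2 : ((t'.val : ℤ) : ZMod N) = (t : ZMod N) - (u : ZMod N) * (b : ZMod N)
            + ((a : ℤ) : ZMod N) * (w : ZMod N) := by
          have h5 : (t'.val : ℤ) = (t - u * b) + a * w := by linarith [hw]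
          rw [h5]; push_cast; ring
        have eDB : ((d : ℤ) : ZMod N) * (u : ZMod N) * B
            = (u : ZMod N) * (b : ZMod N) * D := by
          rw [hB, hD]; push_cast; ring
        have eaD : ((a : ℤ) : ZMod N) * (w : ZMod N) * D = 0 := by
          have h6 := (cast_mul_eq_zero_iff had hd0 ((a : ℤ) * w)).mpr ⟨w, rfl⟩
          rw [← hD] at h6
          push_cast at h6 ⊢
          linear_combination h6
        rw [e1, e2]
        linear_combination eDB + eaD
      exact Subtype.ext (Prod.ext key1 key2)
  rw [← Nat.card_eq_of_bijective f hbij]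
  simp only [Nat.card_prod, Nat.card_zmod]
  exact hda
end

open AddSubgroup

lemma card_zmultiples_coe {N d : ℕ} (hN : N ≠ 0) (hd : d ∣ N) :
    Nat.card (zmultiples ((d : ℕ) : ZMod N)) = N / d := by
  rw [Nat.card_zmultiples, ZMod.addOrderOf_coe d hN, Nat.gcd_eq_right hd]

lemma zmod_addsubgroup (N : ℕ) (hN : N ≠ 0) (K : AddSubgroup (ZMod N)) :
    Nat.card K ∣ N ∧ K = zmultiples (((N / Nat.card K : ℕ)) : ZMod N) := by
  haveI : NeZero N := ⟨hN⟩
  obtain ⟨g, hg⟩ := IsAddCyclic.exists_generator (α := K)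
  have hKg : K = zmultiples ((g : ZMod N)) := by
    ext x
    rw [mem_zmultiples_iff]
    constructor
    · intro hx
      obtain ⟨k, hk⟩ := mem_zmultiples_iff.mp (hg ⟨x, hx⟩)
      exact ⟨k, by simpa using congrArg Subtype.val hk⟩
    · rintro ⟨k, rfl⟩
      exact zsmul_mem g.2 k
  set c : ZMod N := (g : ZMod N) with hc
  set m := Nat.card K with hm
  have hcard : Nat.card (zmultiples c) = m := by rw [← hKg]
  have hmord : addOrderOf c = m := by rw [← Nat.card_zmultiples, hcard]
  have hmN : m ∣ N := by
    rw [← hmord]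
    simpa [Nat.card_zmod] using addOrderOf_dvd_natCard c
  refine ⟨hmN, ?_⟩
  have hm0 : m ≠ 0 := by rw [← hmord]; exact (addOrderOf_pos c).ne'
  have hN0 : 0 < N := Nat.pos_of_ne_zero hN
  have hcv : ((c.val : ℕ) : ZMod N) = c := by simp [ZMod.natCast_val, ZMod.cast_id]
  have hNg : N / N.gcd c.val = m := by
    rw [← ZMod.addOrderOf_coe c.val hN, hcv, hmord]
  have hgcd : N.gcd c.val = N / m := by
    rw [← hNg, Nat.div_div_self (Nat.gcd_dvd_left N c.val) hN]
  have hdvd : (N / m) ∣ c.val := hgcd ▸ Nat.gcd_dvd_right N c.val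
  obtain ⟨e, he⟩ := hdvd
  have hcmem : c ∈ zmultiples (((N / m : ℕ)) : ZMod N) := by
    refine ⟨(e : ℤ), ?_⟩
    rw [← hcv, he]
    push_cast
    rw [zsmul_eq_mul]
    push_cast
    ring
  have hle : zmultiples c ≤ zmultiples (((N / m : ℕ)) : ZMod N) := by
    rw [zmultiples_le]
    exact hcmem
  have hcards : Nat.card (zmultiples (((N / m : ℕ)) : ZMod N)) = m := by
    rw [card_zmultiples_coe hN (Nat.div_dvd_of_dvd hmN), Nat.div_div_self hmN hN]
  rw [hKg]
  exact AddSubgroup.eq_of_le_of_card_ge hle (by rw [hcards, hcard])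

section
variable {N d b : ℕ}

lemma ker_Ld (hN : N ≠ 0) (hd : d ∣ N) (y : ZMod N) :
    ((0 : ZMod N), y) ∈ Ld N d b ↔ y ∈ zmultiples ((d : ℕ) : ZMod N) := by
  have hda : d * (N / d) = N := Nat.mul_div_cancel' hd
  have ha0 : N / d ≠ 0 := by intro h; rw [h, mul_zero] at hda; exact hN hda.symm
  constructor
  · intro h
    obtain ⟨s, t, hp⟩ := mem_Ld.mp h
    rw [Prod.ext_iff] at hp
    obtain ⟨h1, h2⟩ := hp
    obtain ⟨u, hu⟩ : (d : ℤ) ∣ s := by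
      rw [← cast_mul_eq_zero_iff hda ha0]
      exact h1.symm
    refine ⟨u * b + t, ?_⟩
    show (u * b + t) • ((d : ℕ) : ZMod N) = y
    simp only at h2
    rw [zsmul_eq_mul, h2, hu]
    push_cast
    ring
  · rintro ⟨k, hk⟩
    simp only at hk
    rw [← hk]
    refine mem_Ld.mpr ⟨0, k, ?_⟩
    rw [zsmul_eq_mul]
    push_cast
    simp
end

section
variable {N : ℕ}

lemma Ld_eq_of_dvd_sub {d b b' : ℕ} (h : (d : ℤ) ∣ (b : ℤ) - (b' : ℤ)) :
    Ld N d b = Ld N d b' := by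
  obtain ⟨k, hk⟩ := h
  have hB : ((b : ℕ) : ZMod N) = ((b' : ℕ) : ZMod N) + (k : ZMod N) * ((d : ℕ) : ZMod N) := by
    have : ((b : ℤ) : ZMod N) = (((b' : ℤ) + d * k : ℤ) : ZMod N) := by
      rw [show ((b':ℤ) + d * k : ℤ) = b' + (b - b' : ℤ) by rw [hk]]
      push_cast
      ring
    push_cast at this
    rw [this]; ring
  ext p
  rw [mem_Ld, mem_Ld]
  constructor
  · rintro ⟨s, t, rfl⟩
    refine ⟨s, t + s * k, ?_⟩
    rw [Prod.ext_iff]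
    refine ⟨rfl, ?_⟩
    simp only
    rw [hB]
    push_cast
    ring
  · rintro ⟨s, t, rfl⟩
    refine ⟨s, t - s * k, ?_⟩
    rw [Prod.ext_iff]
    refine ⟨rfl, ?_⟩
    simp only
    rw [hB]
    push_cast
    ring

lemma Ld_inj (hN : N ≠ 0) {d d' b b' : ℕ} (hd : d ∣ N) (hd' : d' ∣ N)
    (hb : b < d) (hb' : b' < d') (h : Ld N d b = Ld N d' b') : d = d' ∧ b = b' := by
  have hda : d * (N / d) = N := Nat.mul_div_cancel' hd
  have ha0 : N / d ≠ 0 := by intro h0; rw [h0, mul_zero] at hda; exact hN hda.symm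
  have hdd' : d = d' := by
    have hz : zmultiples ((d : ℕ) : ZMod N) = zmultiples ((d' : ℕ) : ZMod N) := by
      ext y
      rw [← ker_Ld hN hd y (b := b), ← ker_Ld hN hd' y (b := b'), h]
    have hc : N / d = N / d' := by
      rw [← card_zmultiples_coe hN hd, ← card_zmultiples_coe hN hd', hz]
    calc d = N / (N / d) := (Nat.div_div_self hd hN).symm
    _ = N / (N / d') := by rw [hc]
    _ = d' := Nat.div_div_self hd' hN
  subst hdd'
  refine ⟨rfl, ?_⟩
  have hmem : (((N / d : ℕ) : ZMod N), ((b : ℕ) : ZMod N)) ∈ Ld N d b' := by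
    rw [← h]
    exact mem_Ld.mpr ⟨1, 0, by push_cast; simp⟩
  obtain ⟨s, t, hp⟩ := mem_Ld.mp hmem
  rw [Prod.ext_iff] at hp
  obtain ⟨h1, h2⟩ := hp
  simp only at h1 h2
  obtain ⟨u, hu⟩ : (d : ℤ) ∣ (s - 1) := by
    rw [← cast_mul_eq_zero_iff hda ha0, Int.cast_sub, sub_mul, sub_eq_zero]
    simpa using h1.symm
  have hs : s = 1 + d * u := by linarith
  have hzero : (((b : ℤ) - b' - (u * b' + t) * d : ℤ) : ZMod N) = 0 := by
    push_cast
    rw [h2, hs]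
    push_cast
    ring
  obtain ⟨w, hw⟩ := (ZMod.intCast_zmod_eq_zero_iff_dvd _ N).mp hzero
  have hddvd : (d : ℤ) ∣ ((b : ℤ) - b') := by
    have hdN : (d : ℤ) ∣ (N : ℤ) := by exact_mod_cast hd
    have : (b : ℤ) - b' = N * w + (u * b' + t) * d := by linarith
    rw [this]
    exact dvd_add (Dvd.dvd.mul_right hdN w |>.trans (dvd_refl _)) ⟨u * b' + t, by ring⟩
  have := Int.eq_zero_of_abs_lt_dvd hddvd (by
    rw [abs_lt]
    constructor <;> omega)
  omega
end

section
variable {N : ℕ}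

lemma Ld_surj (hN : N ≠ 0) (H : AddSubgroup (ZMod N × ZMod N)) (hH : Nat.card H = N) :
    ∃ d b : ℕ, d ∣ N ∧ b < d ∧ Ld N d b = H := by
  haveI : NeZero N := ⟨hN⟩
  set φ : ↥H →+ ZMod N := (AddMonoidHom.fst _ _).comp H.subtype with hφ
  set K : AddSubgroup (ZMod N) := H.comap (AddMonoidHom.inr _ _) with hK
  set I : AddSubgroup (ZMod N) := H.map (AddMonoidHom.fst _ _) with hI
  -- range of φ is I
  have hrange : φ.range = I := by
    rw [hφ, AddMonoidHom.range_comp, AddSubgroup.range_subtype]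
  -- ker φ ≃ K
  have hkerK : Nat.card φ.ker = Nat.card K := by
    refine Nat.card_congr ⟨fun x => ⟨((x : ↥H) : ZMod N × ZMod N).2, ?_⟩,
      fun y => ⟨⟨((0 : ZMod N), (y : ZMod N)), y.2⟩, rfl⟩, ?_, ?_⟩
    · have hx : ((x : ↥H) : ZMod N × ZMod N).1 = 0 := x.2
      show (AddMonoidHom.inr (ZMod N) (ZMod N)) ((x : ↥H) : ZMod N × ZMod N).2 ∈ H
      have : (AddMonoidHom.inr (ZMod N) (ZMod N)) ((x : ↥H) : ZMod N × ZMod N).2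
          = ((x : ↥H) : ZMod N × ZMod N) := by
        ext
        · exact hx.symm
        · rfl
      rw [this]
      exact (x : ↥H).2
    · intro x
      refine Subtype.ext (Subtype.ext ?_)
      have hx : ((x : ↥H) : ZMod N × ZMod N).1 = 0 := x.2
      exact Prod.ext hx.symm rfl
    · intro y
      rfl
  -- card decomposition
  have hsplit : Nat.card ↥H = Nat.card I * Nat.card K := by
    rw [AddSubgroup.card_eq_card_quotient_mul_card_addSubgroup φ.ker, hkerK]
    congr 1
    rw [← hrange]
    exact Nat.card_congr (QuotientAddGroup.quotientKerEquivRange φ).toEquiv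
  have hcards : Nat.card I * Nat.card K = N := by rw [← hsplit, hH]
  obtain ⟨hKdvd, hKeq⟩ := zmod_addsubgroup N hN K
  obtain ⟨hIdvd, hIeq⟩ := zmod_addsubgroup N hN I
  have hK0 : Nat.card K ≠ 0 := Nat.card_pos.ne'
  set d := N / Nat.card K with hdd
  have hd : d ∣ N := Nat.div_dvd_of_dvd hKdvd
  have hcId : Nat.card I = d :=
    (Nat.div_eq_of_eq_mul_left (Nat.pos_of_ne_zero hK0) hcards.symm).symm
  have hNd : N / d = Nat.card K := by rw [hdd, Nat.div_div_self hKdvd hN]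
  -- generator of I
  have haI : ((N / d : ℕ) : ZMod N) ∈ I := by
    rw [hIeq, hcId]
    exact mem_zmultiples _
  obtain ⟨p, hpH, hp1⟩ := AddSubgroup.mem_map.mp haI
  -- (0, d) ∈ H
  have hdK : ((d : ℕ) : ZMod N) ∈ K := by
    rw [hKeq]
    exact mem_zmultiples _
  have h0d : (((0 : ZMod N), ((d : ℕ) : ZMod N)) : ZMod N × ZMod N) ∈ H := hdK
  -- Ld ≤ H
  have hle : Ld N d (p.2.val) ≤ H := by
    rw [Ld, closure_le]
    rintro q hq
    rcases hq with hq | hq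
    · rw [hq]
      have : (((N / d : ℕ) : ZMod N), ((p.2.val : ℕ) : ZMod N)) = p := by
        refine Prod.ext ?_ ?_
        · exact hp1.symm
        · simp [ZMod.natCast_val, ZMod.cast_id]
      rw [this]
      exact hpH
    · rw [Set.mem_singleton_iff] at hq
      rw [hq]
      exact h0d
  have heq : Ld N d (p.2.val) = H :=
    AddSubgroup.eq_of_le_of_card_ge hle (by rw [hH, card_Ld hN hd])
  have hd0 : d ≠ 0 := by
    intro h0
    rw [h0, Nat.zero_dvd] at hd
    exact hN hd
  refine ⟨d, p.2.val % d, hd, Nat.mod_lt _ (Nat.pos_of_ne_zero hd0), ?_⟩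
  rw [← heq]
  apply Ld_eq_of_dvd_sub
  have h := Nat.mod_add_div p.2.val d
  refine ⟨-((p.2.val / d : ℕ) : ℤ), ?_⟩
  have hz : ((p.2.val : ℕ) : ℤ) = ((p.2.val % d : ℕ) : ℤ) + (d : ℤ) * ((p.2.val / d : ℕ) : ℤ) := by
    exact_mod_cast h.symm
  rw [hz]
  ring
end

theorem stmt_17 (N : ℕ) (hN : 1 ≤ N) :
    Nat.card {H : AddSubgroup (ZMod N × ZMod N) // Nat.card H = N} =
      ∑ d ∈ Nat.divisors N, d := by
  have hN0 : N ≠ 0 := Nat.one_le_iff_ne_zero.mp hN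
  haveI : NeZero N := ⟨hN0⟩
  haveI inst : ∀ (d : N.divisors), NeZero (d : ℕ) :=
    fun d => ⟨(Nat.pos_of_mem_divisors d.2).ne'⟩
  let f : (Σ d : N.divisors, ZMod (d : ℕ)) →
      {H : AddSubgroup (ZMod N × ZMod N) // Nat.card H = N} :=
    fun x => ⟨Ld N (x.1 : ℕ) ((x.2).val), card_Ld hN0 (Nat.dvd_of_mem_divisors x.1.2)⟩
  have hbij : Function.Bijective f := by
    constructor
    · rintro ⟨⟨d, hd⟩, b⟩ ⟨⟨d', hd'⟩, b'⟩ h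
      have h' : Ld N d b.val = Ld N d' b'.val := Subtype.ext_iff.mp h
      haveI : NeZero d := inst ⟨d, hd⟩
      haveI : NeZero d' := inst ⟨d', hd'⟩
      obtain ⟨hdd', hbb'⟩ := Ld_inj hN0 (Nat.dvd_of_mem_divisors hd)
        (Nat.dvd_of_mem_divisors hd') (ZMod.val_lt b) (ZMod.val_lt b') h'
      subst hdd'
      have : b = b' := ZMod.val_injective _ hbb'
      rw [this]
    · rintro ⟨H, hH⟩
      obtain ⟨d, b, hd, hb, heq⟩ := Ld_surj hN0 H hH
      have hdmem : d ∈ N.divisors := Nat.mem_divisors.mpr ⟨hd, hN0⟩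
      haveI : NeZero d := inst ⟨d, hdmem⟩
      refine ⟨⟨⟨d, hdmem⟩, (b : ZMod d)⟩, ?_⟩
      apply Subtype.ext
      show Ld N d (ZMod.val ((b : ℕ) : ZMod d)) = H
      rw [ZMod.val_cast_of_lt hb]
      exact heq
  rw [← Nat.card_eq_of_bijective f hbij]
  letI fin : ∀ d : N.divisors, Fintype (ZMod (d : ℕ)) := fun d => @ZMod.fintype _ (inst d)
  rw [Nat.card_eq_fintype_card, Fintype.card_sigma, Finset.univ_eq_attach,
    ← Finset.sum_attach N.divisors (fun d => d)]
  apply Finset.sum_congr rfl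
  intro d _
  exact ZMod.card _
end
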